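/- arXiv:1310.1012 — 11 statements merged into one kernel-verified Lean document; each statement's English description precedes it below -/
import Mathlib

section
/- If U and V are two crossing involution modules of a symmetric 2-structure G, then U ∪ V is also an involution module of G. -/
/-- Two subsets `A`, `B` of `X` are *crossing* if `A ∩ B`, `A \ B`, `B \ A` are all
nonempty and `A ∪ B ≠ X`. -/
def Crossing {X : Type*} (A B : Set X) : Prop :=
  (A ∩ B).Nonempty ∧ (A \ B).Nonempty ∧ (B \ A).Nonempty ∧ A ∪ B ≠ Set.univ

/-- `U` is an involution module of the symmetric 2-structure `(X, E)` w.r.t. the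
involution `I` of the colors: any two elements of `U` have identical or `I`-swapped
colored neighborhoods outside `U`. -/
def IsInvolutionModule {X : Type*} (E : X → X → ℕ) (I : ℕ → ℕ) (U : Set X) : Prop :=
  ∀ u ∈ U, ∀ v ∈ U,
    (∀ i : ℕ, {x | x ∉ U ∧ E u x = i} = {x | x ∉ U ∧ E v x = i}) ∨
    (∀ i : ℕ, {x | x ∉ U ∧ E u x = i} = {x | x ∉ U ∧ E v x = I i})

/-- The "equal or `I`-swapped neighborhoods outside `W`" relation. -/
def NbrRel {X : Type*} (E : X → X → ℕ) (I : ℕ → ℕ) (W : Set X) (u v : X) : Prop :=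
  (∀ i : ℕ, {x | x ∉ W ∧ E u x = i} = {x | x ∉ W ∧ E v x = i}) ∨
  (∀ i : ℕ, {x | x ∉ W ∧ E u x = i} = {x | x ∉ W ∧ E v x = I i})

lemma nbr_mono {X : Type*} (E : X → X → ℕ) (u v : X) (A B : Set X) (hAB : A ⊆ B)
    (f : ℕ → ℕ) (h : ∀ i, {x | x ∉ A ∧ E u x = i} = {x | x ∉ A ∧ E v x = f i}) :
    ∀ i, {x | x ∉ B ∧ E u x = i} = {x | x ∉ B ∧ E v x = f i} := by
  intro i
  ext x
  simp only [Set.mem_setOf_eq]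
  constructor
  · rintro ⟨hxB, he⟩
    have hxA : x ∉ A := fun h' => hxB (hAB h')
    have hx := Set.ext_iff.mp (h i) x
    simp only [Set.mem_setOf_eq, hxA, not_false_iff, true_and] at hx
    exact ⟨hxB, hx.mp he⟩
  · rintro ⟨hxB, he⟩
    have hxA : x ∉ A := fun h' => hxB (hAB h')
    have hx := Set.ext_iff.mp (h i) x
    simp only [Set.mem_setOf_eq, hxA, not_false_iff, true_and] at hx
    exact ⟨hxB, hx.mpr he⟩

lemma nbrRel_mono {X : Type*} (E : X → X → ℕ) (I : ℕ → ℕ) (u v : X) (A B : Set X)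
    (hAB : A ⊆ B) (h : NbrRel E I A u v) : NbrRel E I B u v := by
  rcases h with h | h
  · exact Or.inl (nbr_mono E u v A B hAB id h)
  · exact Or.inr (nbr_mono E u v A B hAB I h)

lemma nbrRel_trans {X : Type*} (E : X → X → ℕ) (I : ℕ → ℕ) (hinv : ∀ i, I (I i) = i)
    (u w v : X) (W : Set X) (h1 : NbrRel E I W u w) (h2 : NbrRel E I W w v) :
    NbrRel E I W u v := by
  rcases h1 with h1 | h1 <;> rcases h2 with h2 | h2
  · exact Or.inl fun i => (h1 i).trans (h2 i)
  · exact Or.inr fun i => (h1 i).trans (h2 i)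
  · exact Or.inr fun i => (h1 i).trans (h2 (I i))
  · refine Or.inl fun i => ?_
    have := (h1 i).trans (h2 (I i))
    rwa [hinv] at this

/-- If `U` and `V` are two crossing involution modules of a symmetric 2-structure `G`,
then `U ∪ V` is also an involution module of `G`. -/
theorem union_of_crossing_involutionModules {X : Type*} [Fintype X]
    (E : X → X → ℕ) (hsymm : ∀ x y, E x y = E y x)
    (I : ℕ → ℕ) (hinv : ∀ i, I (I i) = i) (hfpf : ∀ i, I i ≠ i)
    (U V : Set X) (hU : IsInvolutionModule E I U) (hV : IsInvolutionModule E I V)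
    (hcross : Crossing U V) :
    IsInvolutionModule E I (U ∪ V) := by
  obtain ⟨w, hwU, hwV⟩ := hcross.1
  have hUsub : U ⊆ U ∪ V := Set.subset_union_left
  have hVsub : V ⊆ U ∪ V := Set.subset_union_right
  have relU : ∀ u ∈ U, ∀ v ∈ U, NbrRel E I (U ∪ V) u v :=
    fun u hu v hv => nbrRel_mono E I u v U (U ∪ V) hUsub (hU u hu v hv)
  have relV : ∀ u ∈ V, ∀ v ∈ V, NbrRel E I (U ∪ V) u v :=
    fun u hu v hv => nbrRel_mono E I u v V (U ∪ V) hVsub (hV u hu v hv)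
  intro u hu v hv
  rcases hu with hu | hu <;> rcases hv with hv | hv
  · exact relU u hu v hv
  · exact nbrRel_trans E I hinv u w v (U ∪ V) (relU u hu w hwU) (relV w hwV v hv)
  · exact nbrRel_trans E I hinv u w v (U ∪ V) (relV u hu w hwV) (relU w hwU v hv)
  · exact relV u hu v hv
end

section
/- If U and V are two crossing involution modules of a symmetric 2-structure G, then U ∩ V is also an involution module of G. -/
/-- If `U` and `V` are two crossing involution modules of a symmetric 2-structure `G`,
then `U ∩ V` is also an involution module of `G`. -/
theorem inter_of_crossing_involutionModules {X : Type*} [Fintype X]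
    (E : X → X → ℕ) (hsymm : ∀ x y, E x y = E y x)
    (I : ℕ → ℕ) (hinv : ∀ i, I (I i) = i) (hfpf : ∀ i, I i ≠ i)
    (U V : Set X) (hU : IsInvolutionModule E I U) (hV : IsInvolutionModule E I V)
    (hcross : Crossing U V) :
    IsInvolutionModule E I (U ∩ V) := by
  obtain ⟨w, hw⟩ := Set.ne_univ_iff_exists_notMem _ |>.mp hcross.2.2.2
  have hwU : w ∉ U := fun h => hw (Or.inl h)
  have hwV : w ∉ V := fun h => hw (Or.inr h)
  rintro u ⟨huU, huV⟩ v ⟨hvU, hvV⟩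
  -- pointwise extraction
  have ext1 : ∀ {W : Set X} {a b : X},
      (∀ i : ℕ, {x | x ∉ W ∧ E a x = i} = {x | x ∉ W ∧ E b x = i}) →
      ∀ x ∉ W, E b x = E a x := by
    intro W a b h x hx
    exact ((h (E a x)).subset ⟨hx, rfl⟩).2
  have ext2 : ∀ {W : Set X} {a b : X},
      (∀ i : ℕ, {x | x ∉ W ∧ E a x = i} = {x | x ∉ W ∧ E b x = I i}) →
      ∀ x ∉ W, E b x = I (E a x) := by
    intro W a b h x hx
    exact ((h (E a x)).subset ⟨hx, rfl⟩).2
  rcases hU u huU v hvU with cU | cU <;> rcases hV u huV v hvV with cV | cV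
  · -- both same
    left
    intro i
    ext x
    simp only [Set.mem_setOf_eq, Set.mem_inter_iff, not_and_or]
    constructor
    · rintro ⟨hx, rfl⟩
      rcases hx with hx | hx
      · exact ⟨Or.inl hx, ext1 cU x hx⟩
      · exact ⟨Or.inr hx, ext1 cV x hx⟩
    · rintro ⟨hx, rfl⟩
      rcases hx with hx | hx
      · exact ⟨Or.inl hx, (ext1 cU x hx).symm⟩
      · exact ⟨Or.inr hx, (ext1 cV x hx).symm⟩
  · -- mismatch: contradiction at w
    exfalso
    have h1 := ext1 cU w hwU
    have h2 := ext2 cV w hwV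
    exact hfpf (E u w) (h2.symm.trans h1)
  · exfalso
    have h1 := ext2 cU w hwU
    have h2 := ext1 cV w hwV
    exact hfpf (E u w) (h1.symm.trans h2)
  · -- both swapped
    right
    intro i
    ext x
    simp only [Set.mem_setOf_eq, Set.mem_inter_iff, not_and_or]
    constructor
    · rintro ⟨hx, rfl⟩
      rcases hx with hx | hx
      · exact ⟨Or.inl hx, ext2 cU x hx⟩
      · exact ⟨Or.inr hx, ext2 cV x hx⟩
    · rintro ⟨hx, hEv⟩
      have key : ∀ hx' : x ∉ U ∨ x ∉ V, E v x = I (E u x) := by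
        rintro (hx' | hx')
        · exact ext2 cU x hx'
        · exact ext2 cV x hx'
      have : I (E u x) = I i := (key hx).symm.trans hEv
      have : E u x = i := by
        have := congrArg I this
        rwa [hinv, hinv] at this
      exact ⟨hx, this⟩
end

section
/- If U and V are two crossing involution modules of a symmetric 2-structure G, then U ∖ V is also an involution module of G. -/
/-- If `U` and `V` are two crossing involution modules of a symmetric 2-structure `G`,
then `U \ V` is also an involution module of `G`. -/
theorem sdiff_of_crossing_involutionModules {X : Type*} [Fintype X]
    (E : X → X → ℕ) (hsymm : ∀ x y, E x y = E y x)
    (I : ℕ → ℕ) (hinv : ∀ i, I (I i) = i) (hfpf : ∀ i, I i ≠ i)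
    (U V : Set X) (hU : IsInvolutionModule E I U) (hV : IsInvolutionModule E I V)
    (hcross : Crossing U V) :
    IsInvolutionModule E I (U \ V) := by
  obtain ⟨-, -, ⟨z, hzV, hzU⟩, -⟩ := hcross
  intro u hu v hv
  have ptw : ∀ (W : Set X) (a b : X) (f : ℕ → ℕ),
      (∀ i, {x | x ∉ W ∧ E a x = i} = {x | x ∉ W ∧ E b x = f i}) →
      ∀ x ∉ W, E b x = f (E a x) := by
    intro W a b f h x hx
    have hm : x ∈ {y | y ∉ W ∧ E a y = E a x} := ⟨hx, rfl⟩
    rw [h (E a x)] at hm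
    exact hm.2
  obtain ⟨f, hf, hfu⟩ : ∃ f : ℕ → ℕ, (f = id ∨ f = I) ∧
      ∀ x ∉ U, E v x = f (E u x) := by
    rcases hU u hu.1 v hv.1 with h | h
    · exact ⟨id, Or.inl rfl, ptw U u v id h⟩
    · exact ⟨I, Or.inr rfl, ptw U u v I h⟩
  have key : ∀ x ∉ U \ V, E v x = f (E u x) := by
    intro x hx
    by_cases hxU : x ∈ U
    · have hxV : x ∈ V := by
        by_contra h; exact hx ⟨hxU, h⟩
      obtain ⟨g, hg, hgx⟩ : ∃ g : ℕ → ℕ, (g = id ∨ g = I) ∧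
          ∀ y ∉ V, E z y = g (E x y) := by
        rcases hV x hxV z hzV with h | h
        · exact ⟨id, Or.inl rfl, ptw V x z id h⟩
        · exact ⟨I, Or.inr rfl, ptw V x z I h⟩
      have h1 := hgx u hu.2
      have h2 := hgx v hv.2
      have h3 := hfu z hzU
      have h4 : g (E x v) = f (g (E x u)) := by
        rw [← h2, hsymm z v, h3, hsymm u z, h1]
      rw [hsymm v x, hsymm u x]
      rcases hg with hg | hg
      · rw [hg] at h4; simpa using h4
      · rw [hg] at h4
        rcases hf with hf | hf
        · rw [hf] at h4 ⊢
          have := congrArg I h4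
          simpa [hinv] using this
        · rw [hf] at h4 ⊢
          have := congrArg I h4
          simpa [hinv] using this
    · exact hfu x hxU
  rcases hf with hf | hf
  · left
    intro i
    ext x
    simp only [Set.mem_setOf_eq]
    constructor
    · rintro ⟨hx, he⟩
      refine ⟨hx, ?_⟩
      have h6 := key x hx; rw [hf] at h6; simp at h6; omega
    · rintro ⟨hx, he⟩
      refine ⟨hx, ?_⟩
      have h6 := key x hx; rw [hf] at h6; simp at h6; omega
  · right
    intro i
    ext x
    simp only [Set.mem_setOf_eq]
    constructor
    · rintro ⟨hx, he⟩
      refine ⟨hx, ?_⟩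
      have h6 := key x hx; rw [hf] at h6; rw [h6, he]
    · rintro ⟨hx, he⟩
      refine ⟨hx, ?_⟩
      have h6 := key x hx; rw [hf] at h6; rw [he] at h6
      have := congrArg I h6
      simpa [hinv] using this.symm
end

section
/- If U and V are two crossing involution modules of a symmetric 2-structure G, then the symmetric difference U △ V is also an involution module of G. -/
namespace SymmDiffModuleAux

/-- Apply the involution or not, according to a boolean. -/
def app (I : ℕ → ℕ) (s : Bool) (i : ℕ) : ℕ := if s then I i else i

variable {I : ℕ → ℕ}

lemma app_comm (hinv : ∀ i, I (I i) = i) (s t : Bool) (i : ℕ) :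
    app I s (app I t i) = app I t (app I s i) := by
  cases s <;> cases t <;> simp [app]

lemma app_app (hinv : ∀ i, I (I i) = i) (s : Bool) (i : ℕ) :
    app I s (app I s i) = i := by
  cases s <;> simp [app, hinv]

lemma app_xor (hinv : ∀ i, I (I i) = i) (s t : Bool) (i : ℕ) :
    app I s (app I t i) = app I (xor s t) i := by
  cases s <;> cases t <;> simp [app, hinv]

lemma app_cancel (hfpf : ∀ i, I i ≠ i) {s t : Bool} {i : ℕ}
    (h : app I s i = app I t i) (j : ℕ) : app I s j = app I t j := by
  cases s <;> cases t <;> simp [app] at h ⊢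
  · exact absurd h.symm (hfpf i)
  · exact absurd h (hfpf i)

/-- Pointwise reformulation of the involution-module condition. -/
lemma isInvolutionModule_iff {X : Type*} (E : X → X → ℕ)
    (hinv : ∀ i, I (I i) = i) (U : Set X) :
    IsInvolutionModule E I U ↔
      ∀ u ∈ U, ∀ v ∈ U, ∃ s : Bool, ∀ x ∉ U, E v x = app I s (E u x) := by
  constructor
  · intro h u hu v hv
    rcases h u hu v hv with h' | h'
    · refine ⟨false, fun x hx => ?_⟩
      have hx1 : x ∈ {z | z ∉ U ∧ E u z = E u x} := ⟨hx, rfl⟩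
      rw [h' (E u x)] at hx1
      simpa [app] using hx1.2
    · refine ⟨true, fun x hx => ?_⟩
      have hx1 : x ∈ {z | z ∉ U ∧ E u z = E u x} := ⟨hx, rfl⟩
      rw [h' (E u x)] at hx1
      simpa [app] using hx1.2
  · intro h u hu v hv
    obtain ⟨s, hs⟩ := h u hu v hv
    cases s
    · left
      intro i
      ext x
      simp only [Set.mem_setOf_eq]
      constructor
      · rintro ⟨hx, he⟩; exact ⟨hx, by rw [hs x hx]; simpa [app] using he⟩
      · rintro ⟨hx, he⟩; refine ⟨hx, ?_⟩; rw [hs x hx] at he; simpa [app] using he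
    · right
      intro i
      ext x
      simp only [Set.mem_setOf_eq]
      constructor
      · rintro ⟨hx, he⟩; exact ⟨hx, by rw [hs x hx]; simp [app, he]⟩
      · rintro ⟨hx, he⟩
        refine ⟨hx, ?_⟩
        rw [hs x hx] at he
        simp only [app, if_true] at he
        have := congrArg I he
        rwa [hinv, hinv] at this

section Main

variable {X : Type*} (E : X → X → ℕ) (hsymm : ∀ x y, E x y = E y x)
  (hinv : ∀ i, I (I i) = i) (hfpf : ∀ i, I i ≠ i)
  {U V : Set X}
  (hU : ∀ u ∈ U, ∀ v ∈ U, ∃ s : Bool, ∀ x ∉ U, E v x = app I s (E u x))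
  (hV : ∀ u ∈ V, ∀ v ∈ V, ∃ s : Bool, ∀ x ∉ V, E v x = app I s (E u x))

include hsymm hinv hfpf hU hV

/-- Same-side case: both `u, v ∈ U \ V`. Needs a witness `y0 ∈ V \ U`. -/
lemma same_side {y0 : X} (hy0V : y0 ∈ V) (hy0U : y0 ∉ U)
    {u v : X} (huU : u ∈ U) (huV : u ∉ V) (hvU : v ∈ U) (hvV : v ∉ V) :
    ∃ s : Bool, ∀ x ∉ symmDiff U V, E v x = app I s (E u x) := by
  obtain ⟨s, hs⟩ := hU u huU v hvU
  refine ⟨s, fun x hx => ?_⟩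
  by_cases hxU : x ∈ U
  · -- then x ∈ V as well
    have hxV : x ∈ V := by
      by_contra hxV
      exact hx (by simp [Set.mem_symmDiff]; tauto)
    obtain ⟨t, ht⟩ := hV y0 hy0V x hxV
    have h1 : E x u = app I t (E y0 u) := ht u huV
    have h2 : E x v = app I t (E y0 v) := ht v hvV
    have h3 : E v y0 = app I s (E u y0) := hs y0 hy0U
    calc E v x = E x v := hsymm v x
      _ = app I t (E y0 v) := h2
      _ = app I t (E v y0) := by rw [hsymm y0 v]
      _ = app I t (app I s (E u y0)) := by rw [h3]
      _ = app I s (app I t (E y0 u)) := by rw [app_comm hinv, hsymm u y0]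
      _ = app I s (E x u) := by rw [h1]
      _ = app I s (E u x) := by rw [hsymm x u]
  · exact hs x hxU

/-- Mixed case: `u ∈ U \ V`, `v ∈ V \ U`. Needs witnesses `w ∈ U ∩ V` and
`y ∉ U ∪ V`. -/
lemma mixed_side {w y : X} (hwU : w ∈ U) (hwV : w ∈ V) (hyU : y ∉ U) (hyV : y ∉ V)
    {u v : X} (huU : u ∈ U) (huV : u ∉ V) (hvV : v ∈ V) (hvU : v ∉ U) :
    ∃ s : Bool, ∀ x ∉ symmDiff U V, E v x = app I s (E u x) := by
  obtain ⟨s₁, hs₁⟩ := hU u huU w hwU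
  obtain ⟨s₂, hs₂⟩ := hV w hwV v hvV
  refine ⟨xor s₁ s₂, fun x hx => ?_⟩
  by_cases hxU : x ∈ U
  · have hxV : x ∈ V := by
      by_contra hxV
      exact hx (by simp [Set.mem_symmDiff]; tauto)
    obtain ⟨r, hr⟩ := hU w hwU x hxU
    obtain ⟨t, ht⟩ := hV w hwV x hxV
    have hrt : ∀ j, app I r j = app I t j := by
      have h1 : app I r (E w y) = app I t (E w y) := by
        rw [← hr y hyU, ← ht y hyV]
      exact app_cancel hfpf h1
    have hux : E u x = app I r (E w u) := by
      rw [hsymm u x, ht u huV, hrt]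
    have hwv : E w v = app I (xor s₁ s₂) (E w u) := by
      have h1 : E w v = app I s₁ (E u v) := hs₁ v hvU
      have h2 : E v u = app I s₂ (E w u) := hs₂ u huV
      rw [h1, hsymm u v, h2, app_xor hinv]
    calc E v x = E x v := hsymm v x
      _ = app I r (E w v) := hr v hvU
      _ = app I r (app I (xor s₁ s₂) (E w u)) := by rw [hwv]
      _ = app I (xor s₁ s₂) (app I r (E w u)) := app_comm hinv _ _ _
      _ = app I (xor s₁ s₂) (E u x) := by rw [hux]
  · have hxV : x ∉ V := by
      by_contra hxV
      exact hx (by simp [Set.mem_symmDiff]; tauto)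
    have h1 : E v x = app I s₂ (E w x) := hs₂ x hxV
    have h2 : E w x = app I s₁ (E u x) := hs₁ x hxU
    rw [h1, h2, app_xor hinv]
    cases s₁ <;> cases s₂ <;> simp [app, hinv]

end Main

end SymmDiffModuleAux

open SymmDiffModuleAux in
/-- If `U` and `V` are two crossing involution modules of a symmetric 2-structure `G`,
then the symmetric difference `U △ V` is also an involution module of `G`. -/
theorem symmDiff_of_crossing_involutionModules {X : Type*} [Fintype X]
    (E : X → X → ℕ) (hsymm : ∀ x y, E x y = E y x)
    (I : ℕ → ℕ) (hinv : ∀ i, I (I i) = i) (hfpf : ∀ i, I i ≠ i)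
    (U V : Set X) (hU : IsInvolutionModule E I U) (hV : IsInvolutionModule E I V)
    (hcross : Crossing U V) :
    IsInvolutionModule E I (symmDiff U V) := by
  rw [isInvolutionModule_iff E hinv] at hU hV ⊢
  obtain ⟨⟨w, hwU, hwV⟩, ⟨z, hzU, hzV⟩, ⟨y0, hy0V, hy0U⟩, hne⟩ := hcross
  obtain ⟨y, hy⟩ : ∃ y, y ∉ U ∪ V := by
    by_contra h
    push_neg at h
    exact hne (Set.eq_univ_of_forall h)
  have hyU : y ∉ U := fun h => hy (Or.inl h)
  have hyV : y ∉ V := fun h => hy (Or.inr h)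
  have hsymmd : symmDiff V U = symmDiff U V := symmDiff_comm V U
  intro u hu v hv
  rw [Set.mem_symmDiff] at hu hv
  rcases hu with ⟨huU, huV⟩ | ⟨huV, huU⟩ <;> rcases hv with ⟨hvU, hvV⟩ | ⟨hvV, hvU⟩
  · exact same_side E hsymm hinv hfpf hU hV hy0V hy0U huU huV hvU hvV
  · exact mixed_side E hsymm hinv hfpf hU hV hwU hwV hyU hyV huU huV hvV hvU
  · obtain ⟨s, hs⟩ :=
      mixed_side E hsymm hinv hfpf hU hV hwU hwV hyU hyV hvU hvV huV huU
    refine ⟨s, fun x hx => ?_⟩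
    have := hs x hx
    rw [this, app_app hinv]
  · have := same_side E hsymm hinv hfpf hV hU
      (y0 := z) hzU hzV huV huU hvV hvU
    rw [hsymmd] at this
    exact this
end

section
/- The family of involution modules of any symmetric 2-structure, together with X and ∅, forms a partitive crossing family: it is closed under intersection, union, difference, and symmetric difference of crossing members. -/
/-- `F ⊆ 2^X` is a *partitive crossing family* if `X, ∅ ∈ F` and `F` is closed under
intersection, union, difference and symmetric difference of crossing members. -/
def IsPartitiveCrossingFamily {X : Type*} (F : Set (Set X)) : Prop :=
  Set.univ ∈ F ∧ ∅ ∈ F ∧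
    ∀ A ∈ F, ∀ B ∈ F, Crossing A B →
      A ∩ B ∈ F ∧ A ∪ B ∈ F ∧ A \ B ∈ F ∧ symmDiff A B ∈ F

/-- The twist of a color by `I`, controlled by a Boolean. -/
def twc (I : ℕ → ℕ) (t : Bool) (i : ℕ) : ℕ := if t then I i else i

lemma twc_twc {I : ℕ → ℕ} (hinv : ∀ i, I (I i) = i) (s t : Bool) (i : ℕ) :
    twc I s (twc I t i) = twc I (xor s t) i := by
  cases s <;> cases t <;> simp [twc, hinv]

lemma twc_swap {I : ℕ → ℕ} (hinv : ∀ i, I (I i) = i) {t : Bool} {i j : ℕ}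
    (h : i = twc I t j) : j = twc I t i := by
  subst h
  rw [twc_twc hinv, Bool.xor_self]
  rfl

lemma twc_fpf {I : ℕ → ℕ} (hfpf : ∀ i, I i ≠ i) {s t : Bool} {i : ℕ}
    (h : twc I s i = twc I t i) : s = t := by
  cases s <;> cases t <;> simp [twc] at h ⊢
  · exact hfpf i h.symm
  · exact hfpf i h

/-- Pointwise reformulation of the involution-module condition. -/
lemma mod_pointwise {X : Type*} {E : X → X → ℕ} {I : ℕ → ℕ}
    (hinv : ∀ i, I (I i) = i) {U : Set X} (hU : IsInvolutionModule E I U) :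
    ∀ u ∈ U, ∀ v ∈ U, ∃ t : Bool, ∀ x ∉ U, E u x = twc I t (E v x) := by
  intro u hu v hv
  rcases hU u hu v hv with h | h
  · refine ⟨false, fun x hx => ?_⟩
    have hm := (Set.ext_iff.mp (h (E u x)) x).mp ⟨hx, rfl⟩
    simpa [twc] using hm.2.symm
  · refine ⟨true, fun x hx => ?_⟩
    have hm := (Set.ext_iff.mp (h (E u x)) x).mp ⟨hx, rfl⟩
    have := hm.2
    simp only [twc, if_true]
    rw [this, hinv]

/-- The converse reformulation. -/
lemma pointwise_mod {X : Type*} {E : X → X → ℕ} {I : ℕ → ℕ}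
    (hinv : ∀ i, I (I i) = i) {U : Set X}
    (h : ∀ u ∈ U, ∀ v ∈ U, ∃ t : Bool, ∀ x ∉ U, E u x = twc I t (E v x)) :
    IsInvolutionModule E I U := by
  intro u hu v hv
  obtain ⟨t, ht⟩ := h u hu v hv
  cases t
  · left
    intro i
    ext x
    simp only [Set.mem_setOf_eq]
    constructor
    · rintro ⟨hx, hE⟩
      have := ht x hx
      simp only [twc, if_neg Bool.false_ne_true] at this
      exact ⟨hx, by rw [← this, hE]⟩
    · rintro ⟨hx, hE⟩
      have := ht x hx
      simp only [twc, if_neg Bool.false_ne_true] at this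
      exact ⟨hx, by rw [this, hE]⟩
  · right
    intro i
    ext x
    simp only [Set.mem_setOf_eq]
    constructor
    · rintro ⟨hx, hE⟩
      have := ht x hx
      simp only [twc, if_true] at this
      refine ⟨hx, ?_⟩
      rw [← hE, this, hinv]
    · rintro ⟨hx, hE⟩
      have := ht x hx
      simp only [twc, if_true] at this
      exact ⟨hx, by rw [this, hE, hinv]⟩

/-- Key lemma: the difference of two crossing involution modules is an
involution module (pointwise form). -/
lemma diff_key {X : Type*} {E : X → X → ℕ} {I : ℕ → ℕ}
    (hsymm : ∀ x y, E x y = E y x) (hinv : ∀ i, I (I i) = i)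
    {A B : Set X}
    (mA : ∀ u ∈ A, ∀ v ∈ A, ∃ t : Bool, ∀ x ∉ A, E u x = twc I t (E v x))
    (mB : ∀ u ∈ B, ∀ v ∈ B, ∃ t : Bool, ∀ x ∉ B, E u x = twc I t (E v x))
    {b0 : X} (hb0 : b0 ∈ B \ A) :
    ∀ u ∈ A \ B, ∀ v ∈ A \ B, ∃ t : Bool, ∀ x ∉ A \ B, E u x = twc I t (E v x) := by
  intro u hu v hv
  obtain ⟨tA, hA⟩ := mA u hu.1 v hv.1
  refine ⟨tA, fun x hx => ?_⟩
  by_cases hxA : x ∈ A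
  · have hxB : x ∈ B := by
      by_contra h
      exact hx ⟨hxA, h⟩
    obtain ⟨σ, hσ⟩ := mB x hxB b0 hb0.1
    have h1 : E x u = twc I σ (E b0 u) := hσ u hu.2
    have h2 : E x v = twc I σ (E b0 v) := hσ v hv.2
    have h3 : E u b0 = twc I tA (E v b0) := hA b0 hb0.2
    have h4 : E b0 v = twc I σ (E x v) := twc_swap hinv h2
    have hx1 : E u x = twc I σ (twc I tA (twc I σ (E x v))) := by
      rw [hsymm u x, h1, hsymm b0 u, h3, hsymm v b0, h4]
    rw [hx1, twc_twc hinv, twc_twc hinv, hsymm x v]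
    congr 1
    cases σ <;> cases tA <;> rfl
  · exact hA x hxA

/-- The family of involution modules of any symmetric 2-structure, together with `X`
and `∅`, forms a partitive crossing family. -/
theorem involutionModules_isPartitiveCrossingFamily {X : Type*} [Fintype X]
    (E : X → X → ℕ) (hsymm : ∀ x y, E x y = E y x)
    (I : ℕ → ℕ) (hinv : ∀ i, I (I i) = i) (hfpf : ∀ i, I i ≠ i) :
    IsPartitiveCrossingFamily
      ({U : Set X | IsInvolutionModule E I U} ∪ {Set.univ, ∅}) := by
  refine ⟨Or.inr (Or.inl rfl), Or.inr (Or.inr rfl), ?_⟩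
  intro A hA B hB hcross
  obtain ⟨⟨w, hw⟩, ⟨a, ha⟩, ⟨b0, hb0⟩, hne⟩ := hcross
  obtain ⟨z, hz⟩ := Set.ne_univ_iff_exists_notMem _ |>.mp hne
  have hzA : z ∉ A := fun h => hz (Or.inl h)
  have hzB : z ∉ B := fun h => hz (Or.inr h)
  -- both A and B are genuine modules
  have hAmod : IsInvolutionModule E I A := by
    rcases hA with h | h | h
    · exact h
    · exact absurd (h ▸ (Set.univ_union B)) hne
    · exact absurd (h ▸ hw.1) (Set.notMem_empty w)
  have hBmod : IsInvolutionModule E I B := by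
    rcases hB with h | h | h
    · exact h
    · exact absurd (h ▸ (Set.union_univ A)) hne
    · exact absurd (h ▸ hw.2) (Set.notMem_empty w)
  have mA := mod_pointwise hinv hAmod
  have mB := mod_pointwise hinv hBmod
  refine ⟨?_, ?_, ?_, ?_⟩
  -- Intersection
  · refine Or.inl (pointwise_mod hinv ?_)
    intro u hu v hv
    obtain ⟨tA, hta⟩ := mA u hu.1 v hv.1
    obtain ⟨tB, htb⟩ := mB u hu.2 v hv.2
    have : tA = tB := twc_fpf hfpf ((hta z hzA).symm.trans (htb z hzB))
    refine ⟨tA, fun x hx => ?_⟩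
    rcases not_and_or.mp (fun h : x ∈ A ∧ x ∈ B => hx h) with h | h
    · exact hta x h
    · rw [this]; exact htb x h
  -- Union
  · refine Or.inl (pointwise_mod hinv ?_)
    have hrw : ∀ p ∈ A ∪ B, ∃ t : Bool, ∀ x ∉ A ∪ B, E p x = twc I t (E w x) := by
      intro p hp
      rcases hp with hp | hp
      · obtain ⟨t, ht⟩ := mA p hp w hw.1
        exact ⟨t, fun x hx => ht x (fun h => hx (Or.inl h))⟩
      · obtain ⟨t, ht⟩ := mB p hp w hw.2
        exact ⟨t, fun x hx => ht x (fun h => hx (Or.inr h))⟩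
    intro u hu v hv
    obtain ⟨tu, htu⟩ := hrw u hu
    obtain ⟨tv, htv⟩ := hrw v hv
    refine ⟨xor tu tv, fun x hx => ?_⟩
    have hwv : E w x = twc I tv (E v x) := twc_swap hinv (htv x hx)
    rw [htu x hx, hwv, twc_twc hinv]
  -- Difference
  · exact Or.inl (pointwise_mod hinv (diff_key hsymm hinv mA mB hb0))
  -- Symmetric difference
  · refine Or.inl (pointwise_mod hinv ?_)
    have hnotmem : ∀ x, x ∉ symmDiff A B → ((x ∈ A ∧ x ∈ B) ∨ (x ∉ A ∧ x ∉ B)) := by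
      intro x hx
      rw [Set.mem_symmDiff] at hx
      push_neg at hx
      by_cases h1 : x ∈ A
      · exact Or.inl ⟨h1, hx.1 h1⟩
      · by_cases h2 : x ∈ B
        · exact absurd (hx.2 h2) h1
        · exact Or.inr ⟨h1, h2⟩
    have hsubAB : ∀ x, x ∉ symmDiff A B → x ∉ A \ B := by
      intro x hx h
      rcases hnotmem x hx with h' | h'
      · exact h.2 h'.2
      · exact h'.1 h.1
    have hsubBA : ∀ x, x ∉ symmDiff A B → x ∉ B \ A := by
      intro x hx h
      rcases hnotmem x hx with h' | h'
      · exact h.2 h'.1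
      · exact h'.2 h.1
    -- the mixed case
    have cross : ∀ u ∈ A \ B, ∀ v ∈ B \ A,
        ∃ t : Bool, ∀ x ∉ symmDiff A B, E u x = twc I t (E v x) := by
      intro u hu v hv
      obtain ⟨τ, hτ⟩ := mA u hu.1 w hw.1
      obtain ⟨ρ, hρ⟩ := mB w hw.2 v hv.1
      refine ⟨xor τ ρ, fun x hx => ?_⟩
      rcases hnotmem x hx with ⟨hxA, hxB⟩ | ⟨hxA, hxB⟩
      · -- x ∈ A ∩ B
        obtain ⟨σ, hσ⟩ := mB x hxB w hw.2
        obtain ⟨σ', hσ'⟩ := mA x hxA w hw.1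
        have hss : σ = σ' := twc_fpf hfpf ((hσ z hzB).symm.trans (hσ' z hzA))
        have e1 : E x u = twc I σ (E w u) := hσ u hu.2
        have e2 : E w u = twc I ρ (E v u) := hρ u hu.2
        have e3 : E u v = twc I τ (E w v) := hτ v hv.2
        have e4 : E w v = twc I σ' (E x v) := twc_swap hinv (hσ' v hv.2)
        have : E u x = twc I σ (twc I ρ (twc I τ (twc I σ' (E x v)))) := by
          rw [hsymm u x, e1, e2, hsymm v u, e3, e4]
        rw [this, twc_twc hinv, twc_twc hinv, twc_twc hinv, hsymm x v, hss]
        congr 1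
        cases σ' <;> cases ρ <;> cases τ <;> rfl
      · -- x ∉ A ∪ B
        rw [hτ x hxA, hρ x hxB, twc_twc hinv]
    intro u hu v hv
    rw [Set.mem_symmDiff] at hu hv
    rcases hu with hu | hu <;> rcases hv with hv | hv
    · -- both in A \ B
      obtain ⟨t, ht⟩ := diff_key hsymm hinv mA mB hb0 u ⟨hu.1, hu.2⟩ v ⟨hv.1, hv.2⟩
      exact ⟨t, fun x hx => ht x (hsubAB x hx)⟩
    · exact cross u ⟨hu.1, hu.2⟩ v ⟨hv.1, hv.2⟩
    · obtain ⟨t, ht⟩ := cross v ⟨hv.1, hv.2⟩ u ⟨hu.1, hu.2⟩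
      exact ⟨t, fun x hx => twc_swap hinv (ht x hx)⟩
    · -- both in B \ A
      obtain ⟨t, ht⟩ := diff_key hsymm hinv mB mA ha u ⟨hu.1, hu.2⟩ v ⟨hv.1, hv.2⟩
      exact ⟨t, fun x hx => ht x (hsubBA x hx)⟩
end

section
/- Let G=(X,E) be a symmetric 2-structure, s ∈ X, and G' = G⊙_s the 2-structure obtained from G by applying the Switch Colors operator at s. If U ⊂ X contains s and U is an involution module of G, then X∖U is a module of G'. -/
/-- `M` is a module of a 2-structure with colors in `C`: all elements of `M` have
identical colored neighborhoods outside `M`. -/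
def IsModuleG {X C : Type*} (E : X → X → C) (M : Set X) : Prop :=
  ∀ m ∈ M, ∀ m' ∈ M, ∀ i : C, {x | x ∉ M ∧ E m x = i} = {x | x ∉ M ∧ E m' x = i}

/-- Canonical representative of the orbit of a triple of colors `(i, j, k)` under the
identifications `(i, j, k) ~ (I i, j, I k) ~ (i, I j, I k) ~ (I i, I j, k)`.  These are
exactly the identifications `Δ_{i,j} = Δ_{I(i),j}` (for triples of the form `(i,i,j)` or
`(i, I i, I j)`) and `Δ_{{i,j},k} = Δ_{{I(i),j},I(k)} = Δ_{{i,I(j)},I(k)} = Δ_{{I(i),I(j)},k}`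
defining the fresh colors of the Switch Colors operator. -/
def tripNorm (I : ℕ → ℕ) (t : ℕ × ℕ × ℕ) : ℕ × ℕ × ℕ :=
  let t1 := if t.1 ≤ I t.1 then t else (I t.1, t.2.1, I t.2.2)
  if t1.2.1 ≤ I t1.2.1 then t1 else (t1.1, I t1.2.1, I t1.2.2)

/-- The *Switch Colors* operator `⊙ : C³ → C'`, where the extended color set `C'` is
realized as `ℕ ⊕ (ℕ × ℕ × ℕ)`: old colors are `Sum.inl`-colors and the fresh colors `Δ`
are `Sum.inr` of canonical orbit representatives.  It satisfies `⊙(i,j,i) = j`,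
`⊙(i,j,I(i)) = I(j)`, `⊙(i,i,j) = ⊙(i,I(i),I(j)) = Δ_{i,j} = Δ_{I(i),j}` for
`j ∉ {i, I(i)}`, and `⊙(i,j,k) = Δ_{{i,j},k}` (fresh, with the prescribed
identifications) in the remaining cases. -/
def odot (I : ℕ → ℕ) (i j k : ℕ) : ℕ ⊕ (ℕ × ℕ × ℕ) :=
  if k = i then Sum.inl j
  else if k = I i then Sum.inl (I j)
  else Sum.inr (tripNorm I (i, j, k))

/-- The 2-structure `G ⊙_s` obtained from `G = (X, E)` by applying the Switch Colors
operator at the pivot `s`: its vertex set is `X \ {s}` and the color of an edge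
`(u, v)` is `⊙(E(s,u), E(s,v), E(u,v))`. -/
def switchAt {X : Type*} (E : X → X → ℕ) (I : ℕ → ℕ) (s : X) :
    {x : X // x ≠ s} → {x : X // x ≠ s} → ℕ ⊕ (ℕ × ℕ × ℕ) :=
  fun u v => odot I (E s u) (E s v) (E u v)

/-- If `U ⊂ X` contains the pivot `s` and `U` is an involution module of `G`, then
`X \ U` is a module of `G ⊙_s`. -/
theorem compl_module_of_involutionModule {X : Type*} [Fintype X]
    (E : X → X → ℕ) (hsymm : ∀ x y, E x y = E y x)
    (I : ℕ → ℕ) (hinv : ∀ i, I (I i) = i) (hfpf : ∀ i, I i ≠ i)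
    (s : X) (U : Set X) (hsU : s ∈ U) (hUne : U ≠ Set.univ)
    (hU : IsInvolutionModule E I U) :
    IsModuleG (switchAt E I s) {x : {x : X // x ≠ s} | (x : X) ∉ U} := by
  intro m hm m' hm' c
  have key : ∀ x : {x : X // x ≠ s}, (x : X) ∈ U →
      switchAt E I s m x = switchAt E I s m' x := by
    intro x hx
    have hm' : (m' : X) ∉ U := hm'
    have hm : (m : X) ∉ U := hm
    rcases hU s hsU x hx with h | h
    · have h1 : E (x : X) m = E s m := by
        have hmem : (m : X) ∈ {y | y ∉ U ∧ E (x : X) y = E s m} := by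
          rw [← h (E s m)]; exact ⟨hm, rfl⟩
        exact hmem.2
      have h2 : E (x : X) m' = E s m' := by
        have hmem : (m' : X) ∈ {y | y ∉ U ∧ E (x : X) y = E s m'} := by
          rw [← h (E s m')]; exact ⟨hm', rfl⟩
        exact hmem.2
      have e1 : E (m : X) x = E s m := by rw [hsymm]; exact h1
      have e2 : E (m' : X) x = E s m' := by rw [hsymm]; exact h2
      simp [switchAt, odot, e1, e2]
    · have h1 : E (x : X) m = I (E s m) := by
        have hmem : (m : X) ∈ {y | y ∉ U ∧ E (x : X) y = I (E s m)} := by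
          rw [← h (E s m)]; exact ⟨hm, rfl⟩
        exact hmem.2
      have h2 : E (x : X) m' = I (E s m') := by
        have hmem : (m' : X) ∈ {y | y ∉ U ∧ E (x : X) y = I (E s m')} := by
          rw [← h (E s m')]; exact ⟨hm', rfl⟩
        exact hmem.2
      have e1 : E (m : X) x = I (E s m) := by rw [hsymm]; exact h1
      have e2 : E (m' : X) x = I (E s m') := by rw [hsymm]; exact h2
      simp only [switchAt, odot, e1, e2, if_neg (hfpf _), if_pos rfl]
      simp
  ext x
  simp only [Set.mem_setOf_eq, not_not]
  constructor
  · rintro ⟨hx, hc⟩; exact ⟨hx, (key x hx) ▸ hc⟩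
  · rintro ⟨hx, hc⟩; exact ⟨hx, (key x hx).symm ▸ hc⟩
end

section
/- Let G=(X,E) be a symmetric 2-structure, s ∈ X, and G' = G⊙_s. If U ⊂ X with s ∈ U and X∖U is an involution module of G, then X∖U is a module of G'. -/
lemma tripNorm_swap (I : ℕ → ℕ) (hinv : ∀ i, I (I i) = i) (hfpf : ∀ i, I i ≠ i)
    (a b c : ℕ) : tripNorm I (I a, b, I c) = tripNorm I (a, b, c) := by
  rcases (hfpf a).lt_or_gt with h | h
  · simp [tripNorm, hinv, le_of_lt h, not_le.mpr h]
  · simp [tripNorm, hinv, le_of_lt h, not_le.mpr h]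

lemma odot_swap (I : ℕ → ℕ) (hinv : ∀ i, I (I i) = i) (hfpf : ∀ i, I i ≠ i)
    (a b c : ℕ) : odot I (I a) b (I c) = odot I a b c := by
  have hInj : ∀ i j, I i = I j → i = j := fun i j h => by
    have := congrArg I h; rwa [hinv, hinv] at this
  unfold odot
  by_cases h1 : c = a
  · subst h1; simp
  · have h1' : I c ≠ I a := fun h => h1 (hInj _ _ h)
    by_cases h2 : c = I a
    · subst h2
      have e1 : a ≠ I a := fun h => hfpf a h.symm
      simp [hinv, e1, hfpf a]
    · have h2' : I c ≠ I (I a) := by rw [hinv]; exact fun h => h2 (by rw [← hinv c, h])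
      simp [h1, h1', h2, h2', tripNorm_swap I hinv hfpf]

/-- If `U ⊂ X` contains the pivot `s` and `X \ U` is an involution module of `G`, then
`X \ U` is a module of `G ⊙_s`. -/
theorem compl_module_of_compl_involutionModule {X : Type*} [Fintype X]
    (E : X → X → ℕ) (hsymm : ∀ x y, E x y = E y x)
    (I : ℕ → ℕ) (hinv : ∀ i, I (I i) = i) (hfpf : ∀ i, I i ≠ i)
    (s : X) (U : Set X) (hsU : s ∈ U) (hUne : U ≠ Set.univ)
    (hU : IsInvolutionModule E I Uᶜ) :
    IsModuleG (switchAt E I s) {x : {x : X // x ≠ s} | (x : X) ∉ U} := by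
  intro m hm m' hm' i
  have key : ∀ x : {x : X // x ≠ s}, (x : X) ∈ U →
      switchAt E I s m x = switchAt E I s m' x := by
    intro x hx
    rcases hU m hm m' hm' with h | h
    · have same : ∀ y, y ∈ U → E (m : X) y = E (m' : X) y := by
        intro y hy
        have h1 : y ∈ {x | x ∉ Uᶜ ∧ E (m : X) x = E (m : X) y} := ⟨by simp [hy], rfl⟩
        rw [h (E (m : X) y)] at h1
        exact h1.2.symm
      have hs : E s (m : X) = E s (m' : X) := by
        rw [hsymm s m, hsymm s m', same s hsU]
      simp only [switchAt]
      rw [hs, same (↑x) hx]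
    · have swap : ∀ y, y ∈ U → E (m' : X) y = I (E (m : X) y) := by
        intro y hy
        have h1 : y ∈ {x | x ∉ Uᶜ ∧ E (m : X) x = E (m : X) y} := ⟨by simp [hy], rfl⟩
        rw [h (E (m : X) y)] at h1
        exact h1.2
      have hs : E s (m' : X) = I (E s (m : X)) := by
        rw [hsymm s m, hsymm s m', swap s hsU]
      have hx2 : E (m' : X) (x : X) = I (E (m : X) (x : X)) := swap x hx
      simp only [switchAt]
      rw [hs, hx2]
      exact (odot_swap I hinv hfpf _ _ _).symm
  ext x
  simp only [Set.mem_setOf_eq, not_not]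
  constructor
  · rintro ⟨hxU, hc⟩
    exact ⟨hxU, (key x hxU).symm.trans hc⟩
  · rintro ⟨hxU, hc⟩
    exact ⟨hxU, (key x hxU).trans hc⟩
end

section
/- Let G=(X,E) be a symmetric 2-structure, s ∈ X, G' = G⊙_s, and U ⊂ X with s ∈ U. Then X∖U is a module of G' if and only if U is an involution module of G or X∖U is an involution module of G. -/

lemma Iinj {I : ℕ → ℕ} (hinv : ∀ i, I (I i) = i) {a b : ℕ} (h : I a = I b) : a = b := by
  have := congrArg I h; rwa [hinv, hinv] at this

lemma trip_eq {I : ℕ → ℕ} (hinv : ∀ i, I (I i) = i) (hfpf : ∀ i, I i ≠ i)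
    (a b e a' e' : ℕ) :
    tripNorm I (a, b, e) = tripNorm I (a', b, e') ↔
      (a' = a ∧ e' = e) ∨ (a' = I a ∧ e' = I e) := by
  have hI : ∀ x y : ℕ, I x = I y ↔ x = y := fun x y => ⟨Iinj hinv, fun h => h ▸ rfl⟩
  simp only [tripNorm]
  split_ifs with h1 h2 h3 h4 h5 h6 h7 h8 h9 <;>
    simp_all only [Prod.mk.injEq, hinv, hI] <;>
    constructor <;>
    · rintro (⟨rfl, rfl⟩ | ⟨rfl, rfl⟩) <;> simp_all [hinv, hI] <;>
        first
          | rfl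
          | (exfalso; omega)
          | exact absurd (show I a = a from le_antisymm (by omega) (by omega)) (hfpf a)
          | exact absurd (show I a' = a' from le_antisymm (by omega) (by omega)) (hfpf a')
          | exact absurd (show I b = b from le_antisymm (by omega) (by omega)) (hfpf b)

lemma odot_eq_iff {I : ℕ → ℕ} (hinv : ∀ i, I (I i) = i) (hfpf : ∀ i, I i ≠ i)
    (a b e a' e' : ℕ) :
    odot I a b e = odot I a' b e' ↔
      (e = a ∧ e' = a') ∨ (e = I a ∧ e' = I a') ∨
      (e ≠ a ∧ e ≠ I a ∧ e' ≠ a' ∧ e' ≠ I a' ∧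
        ((a' = a ∧ e' = e) ∨ (a' = I a ∧ e' = I e))) := by
  have hI : ∀ x y : ℕ, I x = I y ↔ x = y := fun x y => ⟨Iinj hinv, fun h => h ▸ rfl⟩
  have hbb : ∀ x : ℕ, x ≠ I x := fun x h => hfpf x h.symm
  simp only [odot]
  split_ifs with h1 h2 h3 h4 h5 h6 h7 h8 <;>
    simp_all [trip_eq hinv hfpf, hI, hinv]

lemma odot_flip {I : ℕ → ℕ} (hinv : ∀ i, I (I i) = i) (hfpf : ∀ i, I i ≠ i)
    (i j k : ℕ) : odot I (I i) j (I k) = odot I i j k := by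
  have hI : ∀ x y : ℕ, I x = I y ↔ x = y := fun x y => ⟨Iinj hinv, fun h => h ▸ rfl⟩
  by_cases hki : k = i
  · subst hki; simp [odot]
  · by_cases hkIi : k = I i
    · subst hkIi
      have h1 : ¬ (i = I i) := fun h => hfpf i h.symm
      simp [odot, hinv, hfpf i, h1]
    · have c1 : ¬ (I k = I i) := fun h => hki (Iinj hinv h)
      have c2 : ¬ (I k = I (I i)) := by rw [hinv]; exact fun h => hkIi (by rw [← hinv k, h])
      have c3 : ¬ (k = I i) := hkIi
      have c4 : ¬ (k = i) := hki
      simp only [odot, if_neg c1, if_neg c2, if_neg c3, if_neg c4, Sum.inr.injEq]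
      exact (trip_eq hinv hfpf (I i) j (I k) i k).mpr (Or.inr ⟨(hinv i).symm, (hinv k).symm⟩)

lemma isModuleG_iff {X C : Type*} (E : X → X → C) (M : Set X) :
    IsModuleG E M ↔ ∀ m ∈ M, ∀ m' ∈ M, ∀ x, x ∉ M → E m x = E m' x := by
  constructor
  · intro h m hm m' hm' x hx
    have hmem : x ∈ {y | y ∉ M ∧ E m y = E m x} := ⟨hx, rfl⟩
    rw [h m hm m' hm' (E m x)] at hmem
    exact hmem.2.symm
  · intro h m hm m' hm' i
    ext x
    simp only [Set.mem_setOf_eq]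
    exact and_congr_right fun hx => by rw [h m hm m' hm' x hx]

lemma isInvolutionModule_iff {X : Type*} (E : X → X → ℕ) {I : ℕ → ℕ}
    (hinv : ∀ i, I (I i) = i) (U : Set X) :
    IsInvolutionModule E I U ↔
      ∀ u ∈ U, ∀ v ∈ U,
        (∀ x, x ∉ U → E u x = E v x) ∨ (∀ x, x ∉ U → E v x = I (E u x)) := by
  unfold IsInvolutionModule
  refine forall₂_congr fun u hu => forall₂_congr fun v hv => or_congr ?_ ?_
  · constructor
    · intro h x hx
      have hmem : x ∈ {y | y ∉ U ∧ E u y = E u x} := ⟨hx, rfl⟩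
      rw [h (E u x)] at hmem
      exact hmem.2.symm
    · intro h i; ext x
      simp only [Set.mem_setOf_eq]
      exact and_congr_right fun hx => by rw [h x hx]
  · constructor
    · intro h x hx
      have hmem : x ∈ {y | y ∉ U ∧ E u y = E u x} := ⟨hx, rfl⟩
      rw [h (E u x)] at hmem
      exact hmem.2
    · intro h i; ext x
      simp only [Set.mem_setOf_eq]
      refine and_congr_right fun hx => ⟨fun hv => hv ▸ h x hx, fun hv => ?_⟩
      have : I (E u x) = I i := (h x hx).symm.trans hv
      exact Iinj hinv this

/-- For `s ∈ U ⊂ X`: `X \ U` is a module of `G ⊙_s` iff `U` is an involution module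
of `G` or `X \ U` is an involution module of `G`. -/
theorem compl_module_iff_involutionModule {X : Type*} [Fintype X]
    (E : X → X → ℕ) (hsymm : ∀ x y, E x y = E y x)
    (I : ℕ → ℕ) (hinv : ∀ i, I (I i) = i) (hfpf : ∀ i, I i ≠ i)
    (s : X) (U : Set X) (hsU : s ∈ U) (hUne : U ≠ Set.univ) :
    IsModuleG (switchAt E I s) {x : {x : X // x ≠ s} | (x : X) ∉ U} ↔
      (IsInvolutionModule E I U ∨ IsInvolutionModule E I Uᶜ) := by
  rw [isModuleG_iff, isInvolutionModule_iff E hinv, isInvolutionModule_iff E hinv]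
  constructor
  · intro hmod
    -- pointwise key consequence of the module hypothesis
    have key : ∀ m, m ∉ U → ∀ m', m' ∉ U → ∀ x, x ∈ U → x ≠ s →
        ((E m x = E s m ∧ E m' x = E s m') ∨
         (E m x = I (E s m) ∧ E m' x = I (E s m')) ∨
         (E m x ≠ E s m ∧ E m x ≠ I (E s m) ∧ E m' x ≠ E s m' ∧ E m' x ≠ I (E s m') ∧
          ((E s m' = E s m ∧ E m' x = E m x) ∨
           (E s m' = I (E s m) ∧ E m' x = I (E m x))))) := by
      intro m hm m' hm' x hx hxs
      have hms : m ≠ s := fun h => hm (h ▸ hsU)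
      have hm's : m' ≠ s := fun h => hm' (h ▸ hsU)
      have h := hmod ⟨m, hms⟩ hm ⟨m', hm's⟩ hm' ⟨x, hxs⟩ (not_not_intro hx)
      simp only [switchAt] at h
      have h' := (odot_eq_iff hinv hfpf (E s m) (E s x) (E m x) (E s m') (E m' x)).mp h
      exact h'
    by_cases hP : ∀ x ∈ U, (∀ m, m ∉ U → E x m = E s m) ∨ (∀ m, m ∉ U → E x m = I (E s m))
    · left
      intro u hu v hv
      rcases hP u hu with hu1 | hu2 <;> rcases hP v hv with hv1 | hv2
      · exact Or.inl fun x hx => (hu1 x hx).trans (hv1 x hx).symm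
      · exact Or.inr fun x hx => (hv2 x hx).trans (congrArg I (hu1 x hx)).symm
      · exact Or.inr fun x hx => by rw [hv1 x hx, hu2 x hx, hinv]
      · exact Or.inl fun x hx => (hu2 x hx).trans (hv2 x hx).symm
    · right
      push_neg at hP
      obtain ⟨x₀, hx₀U, hP1, hP2⟩ := hP
      obtain ⟨m₀, hm₀U, hm₀⟩ := hP1
      obtain ⟨m₁, hm₁U, hm₁⟩ := hP2
      have hx₀s : x₀ ≠ s := fun h => hm₀ (h ▸ rfl)
      -- every m ∉ U is of "fresh" type at x₀
      have claimN : ∀ m, m ∉ U → E m x₀ ≠ E s m ∧ E m x₀ ≠ I (E s m) := by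
        intro m hm
        rcases key m hm m₀ hm₀U x₀ hx₀U hx₀s with ⟨h1, h2⟩ | ⟨h1, h2⟩ | ⟨h1, h2, _⟩
        · exact absurd ((hsymm x₀ m₀).trans h2) hm₀
        · rcases key m hm m₁ hm₁U x₀ hx₀U hx₀s with ⟨g1, g2⟩ | ⟨g1, g2⟩ | ⟨g1, g2, _⟩
          · exact absurd (g1.symm.trans h1) (fun hh => hfpf (E s m) hh.symm)
          · exact absurd ((hsymm x₀ m₁).trans g2) hm₁
          · exact absurd h1 g2
        · exact ⟨h1, h2⟩
      intro m hm m' hm'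
      have hmem : ∀ y : X, y ∉ Uᶜ ↔ y ∈ U := fun y => by
        rw [Set.mem_compl_iff, not_not]
      rcases key m hm m' hm' x₀ hx₀U hx₀s with ⟨h1, _⟩ | ⟨h1, _⟩ |
        ⟨_, _, _, _, (⟨ha, _⟩ | ⟨ha, _⟩)⟩
      · exact absurd h1 (claimN m hm).1
      · exact absurd h1 (claimN m hm).2
      · -- E s m' = E s m : same everywhere on U
        left
        intro y hy
        rw [hmem] at hy
        by_cases hys : y = s
        · rw [hys, hsymm m s, hsymm m' s, ha]
        · rcases key m hm m' hm' y hy hys with ⟨g1, g2⟩ | ⟨g1, g2⟩ |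
            ⟨_, _, _, _, (⟨_, g2⟩ | ⟨ga, _⟩)⟩
          · rw [g1, g2, ha]
          · rw [g1, g2, ha]
          · exact g2.symm
          · exact absurd (ha.symm.trans ga) (fun hh => hfpf (E s m) hh.symm)
      · -- E s m' = I (E s m) : flipped everywhere on U
        right
        intro y hy
        rw [hmem] at hy
        by_cases hys : y = s
        · rw [hys, hsymm m' s, hsymm m s, ha]
        · rcases key m hm m' hm' y hy hys with ⟨g1, g2⟩ | ⟨g1, g2⟩ |
            ⟨_, _, _, _, (⟨ga, _⟩ | ⟨_, g2⟩)⟩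
          · rw [g1, g2, ha]
          · rw [g1, g2, ha]
          · exact absurd (ga.symm.trans ha) (fun hh => hfpf (E s m) hh.symm)
          · exact g2
  · intro h m hm m' hm' x hx
    rw [Set.mem_setOf_eq, not_not] at hx
    simp only [Set.mem_setOf_eq] at hm hm'
    rcases h with hU | hUc
    · rcases hU s hsU (↑x) hx with h1 | h2
      · -- all neighborhoods of x agree with those of s
        show odot I (E s m) (E s x) (E m x) = odot I (E s m') (E s x) (E m' x)
        rw [show E (m : X) x = E s m from (hsymm (↑m) (↑x)).trans (h1 (↑m) hm).symm,
            show E (m' : X) x = E s m' from (hsymm (↑m') (↑x)).trans (h1 (↑m') hm').symm]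
        simp [odot]
      · show odot I (E s m) (E s x) (E m x) = odot I (E s m') (E s x) (E m' x)
        rw [show E (m : X) x = I (E s m) from (hsymm (↑m) (↑x)).trans (h2 (↑m) hm),
            show E (m' : X) x = I (E s m') from (hsymm (↑m') (↑x)).trans (h2 (↑m') hm')]
        have c1 : ¬ (I (E s (m : X)) = E s (m : X)) := hfpf _
        have c1' : ¬ (I (E s (m' : X)) = E s (m' : X)) := hfpf _
        simp [odot, c1, c1']
    · have hmc : (m : X) ∈ Uᶜ := hm
      have hm'c : (m' : X) ∈ Uᶜ := hm'
      rcases hUc (↑m) hmc (↑m') hm'c with h1 | h2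
      · have ha : E s (m' : X) = E s (m : X) := by
          rw [hsymm s (↑m'), hsymm s (↑m)]
          exact (h1 s (not_not_intro hsU)).symm
        have he : E (m' : X) (x : X) = E (m : X) (x : X) :=
          (h1 (↑x) (not_not_intro hx)).symm
        show odot I (E s m) (E s x) (E m x) = odot I (E s m') (E s x) (E m' x)
        rw [ha, he]
      · have ha : E s (m' : X) = I (E s (m : X)) := by
          rw [hsymm s (↑m'), hsymm s (↑m)]
          exact h2 s (not_not_intro hsU)
        have he : E (m' : X) (x : X) = I (E (m : X) (x : X)) := h2 (↑x) (not_not_intro hx)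
        show odot I (E s m) (E s x) (E m x) = odot I (E s m') (E s x) (E m' x)
        rw [ha, he, odot_flip hinv hfpf]
end

section
/- A graph G is totally decomposable by involution modular decomposition (i.e., a switch cograph) if and only if for any vertex p, the graph obtained from G by a Seidel switch at p is a cograph. -/
open SimpleGraph

/-- `G` contains no induced copy of `H`. -/
def IsInducedFree {α β : Type*} (H : SimpleGraph α) (G : SimpleGraph β) : Prop :=
  IsEmpty (H ↪g G)

/-- The Gem: a path `P₄` (vertices `0-1-2-3`) together with a dominating vertex `4`. -/
def gem : SimpleGraph (Fin 5) :=
  SimpleGraph.fromRel (fun a b =>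
    (a = 0 ∧ b = 1) ∨ (a = 1 ∧ b = 2) ∨ (a = 2 ∧ b = 3) ∨
    (a = 4 ∧ (b = 0 ∨ b = 1 ∨ b = 2 ∨ b = 3)))

/-- The Bull: a triangle `0, 1, 2` with two pendant vertices `3` (adjacent to `0`)
and `4` (adjacent to `1`). -/
def bull : SimpleGraph (Fin 5) :=
  SimpleGraph.fromRel (fun a b =>
    (a = 0 ∧ b = 1) ∨ (a = 1 ∧ b = 2) ∨ (a = 0 ∧ b = 2) ∨
    (a = 3 ∧ b = 0) ∨ (a = 4 ∧ b = 1))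

/-- A *switch cograph* is a graph with no induced Gem, co-Gem, Bull, or `C₅`. -/
def IsSwitchCograph {V : Type*} (G : SimpleGraph V) : Prop :=
  IsInducedFree gem G ∧ IsInducedFree gemᶜ G ∧
    IsInducedFree bull G ∧ IsInducedFree (cycleGraph 5) G

/-- The Seidel switch of `G` at `p`: delete `p` and complement the adjacency between
the neighbors and the non-neighbors of `p`. -/
def seidelSwitch {V : Type*} (G : SimpleGraph V) (p : V) :
    SimpleGraph {v : V // v ≠ p} where
  Adj x y := Xor' (G.Adj x y) (Xor' (G.Adj p x) (G.Adj p y))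
  symm := by
    constructor
    intro x y h
    have hc := G.adj_comm (x : V) (y : V)
    unfold Xor' at *
    unfold Xor at *
    tauto
  loopless := by
    constructor
    intro x h
    unfold Xor' at h
    rcases h with ⟨ha, _⟩ | ⟨hx, hnx⟩
    · exact G.loopless.irrefl x ha
    · rcases hx with ⟨a, b⟩ | ⟨a, b⟩ <;> exact b a


/-! ### Auxiliary machinery -/

section Aux

/-- Decidable version of path adjacency on `Fin 4`. -/
def padj (i j : Fin 4) : Prop := (i : ℕ) + 1 = j ∨ (j : ℕ) + 1 = i

instance : DecidableRel padj := fun _ _ => inferInstanceAs (Decidable (_ ∨ _))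

instance {a b : Prop} [Decidable a] [Decidable b] : Decidable (Xor' a b) :=
  inferInstanceAs (Decidable (Xor a b))

/-- The graph on `Fin 5` obtained from `P₄` (on `0,1,2,3`) by "un-switching" at a new
vertex `4` whose neighborhood among `0,1,2,3` is given by `s`. -/
def switchBack (s : Fin 4 → Bool) : SimpleGraph (Fin 5) :=
  fromRel (fun a b =>
    if ha : (a : ℕ) < 4 then
      if hb : (b : ℕ) < 4 then Xor' (padj ⟨a, ha⟩ ⟨b, hb⟩) (s ⟨a, ha⟩ ≠ s ⟨b, hb⟩)
      else s ⟨a, ha⟩ = true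
    else if hb : (b : ℕ) < 4 then s ⟨b, hb⟩ = true else False)

instance (s : Fin 4 → Bool) : DecidableRel (switchBack s).Adj := fun a b =>
  decidable_of_iff' _ (fromRel_adj _ a b)

instance : DecidableRel gem.Adj := fun a b => decidable_of_iff' _ (fromRel_adj _ a b)

instance : DecidableRel bull.Adj := fun a b => decidable_of_iff' _ (fromRel_adj _ a b)

instance : DecidableRel gemᶜ.Adj := fun _ _ => inferInstanceAs (Decidable (_ ∧ _))

/-- Propositional computation for switching. -/
lemma xor_cancel {R S X W : Prop} (h1 : R ↔ Xor' X W) (h2 : S ↔ W) : Xor' R S ↔ X := by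
  unfold Xor' at *
  unfold Xor at *
  tauto

/-- Build a graph embedding from an injective vertex map respecting adjacency. -/
def embOfMaps {α β : Type*} {A : SimpleGraph α} {B : SimpleGraph β} (σ : α → β)
    (hinj : Function.Injective σ) (hadj : ∀ i j, A.Adj i j ↔ B.Adj (σ i) (σ j)) :
    A ↪g B :=
  ⟨⟨σ, hinj⟩, fun {i j} => (hadj i j).symm⟩

def sb0 : gemᶜ ↪g switchBack ![false,false,false,false] :=
  embOfMaps ![1, 3, 0, 2, 4] (by decide) (by decide)

def sb1 : bull ↪g switchBack ![false,false,false,true] :=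
  embOfMaps ![1, 3, 0, 2, 4] (by decide) (by decide)

def sb2 : gemᶜ ↪g switchBack ![false,false,true,false] :=
  embOfMaps ![0, 4, 1, 2, 3] (by decide) (by decide)

def sb3 : gem ↪g switchBack ![false,false,true,true] :=
  embOfMaps ![1, 0, 2, 4, 3] (by decide) (by decide)

def sb4 : gemᶜ ↪g switchBack ![false,true,false,false] :=
  embOfMaps ![1, 2, 4, 3, 0] (by decide) (by decide)

def sb5 : gemᶜ ↪g switchBack ![false,true,false,true] :=
  embOfMaps ![3, 1, 0, 4, 2] (by decide) (by decide)

def sb6 : bull ↪g switchBack ![false,true,true,false] :=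
  embOfMaps ![1, 2, 4, 3, 0] (by decide) (by decide)

def sb7 : gem ↪g switchBack ![false,true,true,true] :=
  embOfMaps ![0, 3, 4, 1, 2] (by decide) (by decide)

def sb8 : bull ↪g switchBack ![true,false,false,false] :=
  embOfMaps ![0, 2, 3, 4, 1] (by decide) (by decide)

def sb9 : cycleGraph 5 ↪g switchBack ![true,false,false,true] :=
  embOfMaps ![0, 2, 1, 3, 4] (by decide) (by decide)

def sb10 : gemᶜ ↪g switchBack ![true,false,true,false] :=
  embOfMaps ![0, 2, 3, 4, 1] (by decide) (by decide)

def sb11 : bull ↪g switchBack ![true,false,true,true] :=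
  embOfMaps ![3, 4, 2, 1, 0] (by decide) (by decide)

def sb12 : gem ↪g switchBack ![true,true,false,false] :=
  embOfMaps ![2, 3, 1, 4, 0] (by decide) (by decide)

def sb13 : bull ↪g switchBack ![true,true,false,true] :=
  embOfMaps ![0, 4, 1, 2, 3] (by decide) (by decide)

def sb14 : gem ↪g switchBack ![true,true,true,false] :=
  embOfMaps ![2, 4, 0, 3, 1] (by decide) (by decide)

def sb15 : gem ↪g switchBack ![true,true,true,true] :=
  embOfMaps ![0, 1, 2, 3, 4] (by decide) (by decide)

/-- Every `switchBack` graph contains one of the four forbidden graphs. -/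
lemma switchBack_key (s : Fin 4 → Bool) :
    Nonempty (gem ↪g switchBack s) ∨ Nonempty (gemᶜ ↪g switchBack s) ∨
      Nonempty (bull ↪g switchBack s) ∨ Nonempty (cycleGraph 5 ↪g switchBack s) := by
  have hs : s = ![s 0, s 1, s 2, s 3] := by
    funext i; fin_cases i <;> rfl
  rw [hs]
  cases h0 : s 0 <;> cases h1 : s 1 <;> cases h2 : s 2 <;> cases h3 : s 3
  exacts [Or.inr (Or.inl ⟨sb0⟩),
    Or.inr (Or.inr (Or.inl ⟨sb1⟩)),
    Or.inr (Or.inl ⟨sb2⟩),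
    Or.inl ⟨sb3⟩,
    Or.inr (Or.inl ⟨sb4⟩),
    Or.inr (Or.inl ⟨sb5⟩),
    Or.inr (Or.inr (Or.inl ⟨sb6⟩)),
    Or.inl ⟨sb7⟩,
    Or.inr (Or.inr (Or.inl ⟨sb8⟩)),
    Or.inr (Or.inr (Or.inr ⟨sb9⟩)),
    Or.inr (Or.inl ⟨sb10⟩),
    Or.inr (Or.inr (Or.inl ⟨sb11⟩)),
    Or.inl ⟨sb12⟩,
    Or.inr (Or.inr (Or.inl ⟨sb13⟩)),
    Or.inl ⟨sb14⟩,
    Or.inl ⟨sb15⟩]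

/-- If the switch at `p` contains an induced `P₄`, then `G` contains the corresponding
`switchBack` graph with `p` as the fifth vertex. -/
def switchBack_emb {V : Type*} {G : SimpleGraph V} {p : V}
    (f : pathGraph 4 ↪g seidelSwitch G p) (s : Fin 4 → Bool)
    (hs : ∀ i, s i = true ↔ G.Adj p (f i)) : switchBack s ↪g G := by
  have hP : ∀ i j : Fin 4, padj i j ↔
      Xor' (G.Adj (f i) (f j)) (Xor' (G.Adj p (f i)) (G.Adj p (f j))) := by
    intro i j
    exact pathGraph_adj.symm.trans (f.map_rel_iff (a := i) (b := j)).symm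
  have hB : ∀ i j : Fin 4, (s i ≠ s j) ↔ Xor' (G.Adj p (f i)) (G.Adj p (f j)) := by
    intro i j
    rw [← hs i, ← hs j]
    cases s i <;> cases s j <;> simp [Xor']
  refine embOfMaps (A := switchBack s) (B := G)
    (fun a => if h : (a : ℕ) < 4 then ((f ⟨a, h⟩ : {v : V // v ≠ p}) : V) else p) ?_ ?_
  · intro a b h
    dsimp only at h
    split_ifs at h with ha hb hb
    · have h2 : ((⟨a, ha⟩ : Fin 4) : ℕ) = ((⟨b, hb⟩ : Fin 4) : ℕ) := by
        rw [f.injective (Subtype.ext h)]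
      exact Fin.ext h2
    · exact absurd h (f ⟨a, ha⟩).2
    · exact absurd h.symm (f ⟨b, hb⟩).2
    · have := a.isLt; have := b.isLt; omega
  · intro a b
    simp only [switchBack, fromRel_adj]
    split_ifs with ha hb hb
    · -- both in the path
      by_cases hab : a = b
      · subst hab
        simp
      · have hswap1 : Xor' (padj ⟨a, ha⟩ ⟨b, hb⟩) (s ⟨a, ha⟩ ≠ s ⟨b, hb⟩) ↔
            G.Adj (f ⟨a, ha⟩) (f ⟨b, hb⟩) :=
          xor_cancel (hP ⟨a, ha⟩ ⟨b, hb⟩) (hB ⟨a, ha⟩ ⟨b, hb⟩)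
        have hswap2 : Xor' (padj ⟨b, hb⟩ ⟨a, ha⟩) (s ⟨b, hb⟩ ≠ s ⟨a, ha⟩) ↔
            G.Adj (f ⟨a, ha⟩) (f ⟨b, hb⟩) :=
          (xor_cancel (hP ⟨b, hb⟩ ⟨a, ha⟩) (hB ⟨b, hb⟩ ⟨a, ha⟩)).trans
            (G.adj_comm _ _)
        constructor
        · rintro ⟨-, h | h⟩
          · exact hswap1.mp h
          · exact hswap2.mp h
        · intro hadj
          exact ⟨hab, Or.inl (hswap1.mpr hadj)⟩
    · have hab : a ≠ b := by
        intro h; rw [h] at ha; exact hb ha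
      have hsi := hs ⟨a, ha⟩
      constructor
      · rintro ⟨-, h | h⟩ <;> exact (G.adj_comm p _).mp (hsi.mp h)
      · intro hadj
        exact ⟨hab, Or.inl (hsi.mpr ((G.adj_comm _ p).mp hadj))⟩
    · have hab : a ≠ b := by
        intro h; rw [h] at ha; exact ha hb
      have hsj := hs ⟨b, hb⟩
      constructor
      · rintro ⟨-, h | h⟩ <;> exact hsj.mp h
      · intro hadj
        exact ⟨hab, Or.inl (hsj.mpr hadj)⟩
    · simp [G.irrefl]
  
/-- From an embedding of a five-vertex graph `H` into `G`, together with combinatorial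
data describing a `P₄` inside the switch of `H` at vertex `k`, produce an induced path
in the Seidel switch of `G` at the image of `k`. -/
def path_emb {V : Type*} {G : SimpleGraph V} {H : SimpleGraph (Fin 5)} (g : H ↪g G)
    (k : Fin 5) (σ : Fin 4 → Fin 5) (hinj : Function.Injective σ) (hne : ∀ i, σ i ≠ k)
    (hadj : ∀ i j, padj i j ↔
      Xor' (H.Adj (σ i) (σ j)) (Xor' (H.Adj k (σ i)) (H.Adj k (σ j)))) :
    pathGraph 4 ↪g seidelSwitch G (g k) := by
  refine embOfMaps (fun i => ⟨g (σ i), fun h => hne i (g.injective h)⟩) ?_ ?_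
  · intro i j h
    exact hinj (g.injective (congrArg Subtype.val h))
  · intro i j
    rw [pathGraph_adj]
    have h := hadj i j
    simp only [← g.map_rel_iff] at h
    exact h

end Aux


/-- A graph is a switch cograph (totally decomposable by involution modular
decomposition, i.e. (Gem, co-Gem, Bull, C₅)-free) iff for every vertex `p`, the
Seidel switch of `G` at `p` is a cograph (`P₄`-free). -/
theorem isSwitchCograph_iff_seidelSwitch_cograph {V : Type*} [Fintype V] [DecidableEq V]
    (G : SimpleGraph V) :
    IsSwitchCograph G ↔ ∀ p : V, IsInducedFree (pathGraph 4) (seidelSwitch G p) := by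
  classical
  constructor
  · rintro ⟨hg, hcg, hb, hc⟩ p
    refine ⟨fun f => ?_⟩
    set s : Fin 4 → Bool := fun i => decide (G.Adj p (f i)) with hsdef
    have hs : ∀ i, s i = true ↔ G.Adj p (f i) := fun i => by
      simp [hsdef]
    have e := switchBack_emb f s hs
    rcases switchBack_key s with hk | hk | hk | hk
    · obtain ⟨g⟩ := hk
      exact hg.false (e.comp g)
    · obtain ⟨g⟩ := hk
      exact hcg.false (e.comp g)
    · obtain ⟨g⟩ := hk
      exact hb.false (e.comp g)
    · obtain ⟨g⟩ := hk
      exact hc.false (e.comp g)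
  · intro h
    refine ⟨⟨fun g => ?_⟩, ⟨fun g => ?_⟩, ⟨fun g => ?_⟩, ⟨fun g => ?_⟩⟩
    · exact (h (g 0)).false (path_emb g 0 ![2, 3, 1, 4] (by decide) (by decide) (by decide))
    · exact (h (g 0)).false (path_emb g 0 ![1, 2, 4, 3] (by decide) (by decide) (by decide))
    · exact (h (g 0)).false (path_emb g 0 ![1, 2, 4, 3] (by decide) (by decide) (by decide))
    · exact (h (g 0)).false (path_emb g 0 ![1, 3, 2, 4] (by decide) (by decide) (by decide))
end

section
/- Let G be a graph whose binary involution modular decomposition tree has a clique node N=(N₁,N₂) with children A=(A₁,A₂) and B=(B₁,B₂), where all edges are present between A₁ and B₁ and between A₂ and B₂, and no edges between A₁ and B₂ or between A₂ and B₁. Then the maximum clique size of G_[N] equals the maximum of: ω(G_[A₁])+ω(G_[B₁]), ω(G_[A₂])+ω(G_[B₂]), ω(G_[A]), ω(G_[B]). -/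
open SimpleGraph

private lemma induce_cliqueNum_le {V : Type*} [Fintype V] [DecidableEq V]
    (G : SimpleGraph V) (S : Set V) [Fintype S] :
    (G.induce S).cliqueNum ≤ G.cliqueNum := by
  obtain ⟨t, ht⟩ := (G.induce S).exists_isNClique_cliqueNum
  have hc : G.IsClique (↑(t.map ⟨Subtype.val, Subtype.val_injective⟩) : Set V) := by
    intro x hx y hy hxy
    simp only [Finset.coe_map, Set.mem_image, Finset.mem_coe] at hx hy
    obtain ⟨a, ha, rfl⟩ := hx
    obtain ⟨b, hb, rfl⟩ := hy
    have : a ≠ b := fun h => hxy (by rw [h])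
    exact ht.isClique ha hb this
  calc (G.induce S).cliqueNum = (t.map ⟨Subtype.val, Subtype.val_injective⟩).card := by
        rw [Finset.card_map, ht.card_eq]
    _ ≤ G.cliqueNum := hc.card_le_cliqueNum

private lemma card_le_induce_cliqueNum {V : Type*} [Fintype V] [DecidableEq V]
    (G : SimpleGraph V) (S : Set V) [Fintype S] (s : Finset V)
    (hs : ∀ x ∈ s, x ∈ S) (hc : G.IsClique (↑s : Set V)) :
    s.card ≤ (G.induce S).cliqueNum := by
  classical
  let t : Finset S := s.attach.map ⟨fun x => ⟨x.1, hs x.1 x.2⟩,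
    by intro a b h; exact Subtype.ext (congrArg (fun z : S => (z : V)) h)⟩
  have htc : (G.induce S).IsClique (↑t : Set S) := by
    intro x hx y hy hxy
    simp only [t, Finset.coe_map, Set.mem_image, Finset.mem_coe, Finset.mem_attach,
      true_and] at hx hy
    obtain ⟨a, ha⟩ := hx
    obtain ⟨b, hb⟩ := hy
    have hxy' : (x : V) ≠ (y : V) := fun h => hxy (Subtype.ext h)
    have hxs : (x : V) ∈ s := by rw [← ha]; exact a.2
    have hys : (y : V) ∈ s := by rw [← hb]; exact b.2
    exact hc hxs hys hxy'
  have : t.card = s.card := by simp [t]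
  calc s.card = t.card := this.symm
    _ ≤ (G.induce S).cliqueNum := htc.card_le_cliqueNum

private lemma induce_cliqueNum_witness {V : Type*} [Fintype V] [DecidableEq V]
    (G : SimpleGraph V) (S : Set V) [Fintype S] :
    ∃ s : Finset V, (∀ x ∈ s, x ∈ S) ∧ G.IsClique (↑s : Set V) ∧
      s.card = (G.induce S).cliqueNum := by
  obtain ⟨t, ht⟩ := (G.induce S).exists_isNClique_cliqueNum
  refine ⟨t.map ⟨Subtype.val, Subtype.val_injective⟩, ?_, ?_, ?_⟩
  · intro x hx
    simp only [Finset.mem_map, Function.Embedding.coeFn_mk] at hx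
    obtain ⟨a, _, rfl⟩ := hx
    exact a.2
  · intro x hx y hy hxy
    simp only [Finset.coe_map, Set.mem_image, Finset.mem_coe] at hx hy
    obtain ⟨a, ha, rfl⟩ := hx
    obtain ⟨b, hb, rfl⟩ := hy
    have : a ≠ b := fun h => hxy (by rw [h])
    exact ht.isClique ha hb this
  · rw [Finset.card_map, ht.card_eq]

/-- Maximum clique at a clique node of the binary involution modular decomposition
tree.  Suppose the vertices of `G` are partitioned into `A₁, A₂, B₁, B₂` with complete
joins `A₁–B₁` and `A₂–B₂` and no edges `A₁–B₂` nor `A₂–B₁`.  Then the maximum clique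
size of `G` is the maximum of `ω(A₁)+ω(B₁)`, `ω(A₂)+ω(B₂)`, `ω(A₁∪A₂)` and
`ω(B₁∪B₂)`. -/
theorem cliqueNum_clique_node {V : Type*} [Fintype V] [DecidableEq V]
    (G : SimpleGraph V) (A₁ A₂ B₁ B₂ : Finset V)
    (hcover : A₁ ∪ A₂ ∪ B₁ ∪ B₂ = Finset.univ)
    (hA : Disjoint A₁ A₂) (hB : Disjoint B₁ B₂)
    (hAB₁ : Disjoint A₁ B₁) (hAB₂ : Disjoint A₁ B₂)
    (hAB₃ : Disjoint A₂ B₁) (hAB₄ : Disjoint A₂ B₂)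
    (h11 : ∀ x ∈ A₁, ∀ y ∈ B₁, G.Adj x y)
    (h22 : ∀ x ∈ A₂, ∀ y ∈ B₂, G.Adj x y)
    (h12 : ∀ x ∈ A₁, ∀ y ∈ B₂, ¬ G.Adj x y)
    (h21 : ∀ x ∈ A₂, ∀ y ∈ B₁, ¬ G.Adj x y) :
    G.cliqueNum =
      max (max ((G.induce (A₁ : Set V)).cliqueNum + (G.induce (B₁ : Set V)).cliqueNum)
               ((G.induce (A₂ : Set V)).cliqueNum + (G.induce (B₂ : Set V)).cliqueNum))
          (max ((G.induce ((A₁ ∪ A₂ : Finset V) : Set V)).cliqueNum)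
               ((G.induce ((B₁ ∪ B₂ : Finset V) : Set V)).cliqueNum)) := by
  classical
  -- helper: sum of two joined cliqueNums ≤ ω(G)
  have join_le : ∀ (X Y : Finset V), Disjoint X Y → (∀ x ∈ X, ∀ y ∈ Y, G.Adj x y) →
      (G.induce (X : Set V)).cliqueNum + (G.induce (Y : Set V)).cliqueNum ≤ G.cliqueNum := by
    intro X Y hXY hadj
    obtain ⟨s, hsX, hsc, hscard⟩ := induce_cliqueNum_witness G (X : Set V)
    obtain ⟨t, htY, htc, htcard⟩ := induce_cliqueNum_witness G (Y : Set V)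
    have hst : Disjoint s t := by
      refine Finset.disjoint_left.mpr fun x hxs hxt => ?_
      exact (Finset.disjoint_left.mp hXY) (hsX x hxs) (htY x hxt)
    have hunion : G.IsClique (↑(s ∪ t) : Set V) := by
      intro x hx y hy hxy
      simp only [Finset.coe_union, Set.mem_union, Finset.mem_coe] at hx hy
      rcases hx with hx | hx <;> rcases hy with hy | hy
      · exact hsc hx hy hxy
      · exact hadj x (hsX x hx) y (htY y hy)
      · exact (hadj y (hsX y hy) x (htY x hx)).symm
      · exact htc hx hy hxy
    calc (G.induce (X : Set V)).cliqueNum + (G.induce (Y : Set V)).cliqueNum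
        = s.card + t.card := by rw [hscard, htcard]
      _ = (s ∪ t).card := (Finset.card_union_of_disjoint hst).symm
      _ ≤ G.cliqueNum := hunion.card_le_cliqueNum
  apply le_antisymm
  · -- main direction: ω(G) ≤ max ...
    obtain ⟨s, hs⟩ := G.exists_isNClique_cliqueNum
    rw [← hs.card_eq]
    have hsc := hs.isClique
    -- case analysis
    by_cases hA1 : ∃ x ∈ s, x ∈ A₁
    · obtain ⟨a, has, haA⟩ := hA1
      -- s ∩ B₂ = ∅
      have hnB2 : ∀ x ∈ s, x ∉ B₂ := by
        intro x hxs hxB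
        have hne : a ≠ x := fun h => (Finset.disjoint_left.mp hAB₂) haA (h ▸ hxB)
        exact h12 a haA x hxB (hsc has hxs hne)
      by_cases hA2 : ∃ x ∈ s, x ∈ A₂
      · obtain ⟨a2, ha2s, ha2A⟩ := hA2
        have hnB1 : ∀ x ∈ s, x ∉ B₁ := by
          intro x hxs hxB
          have hne : a2 ≠ x := fun h => (Finset.disjoint_left.mp hAB₃) ha2A (h ▸ hxB)
          exact h21 a2 ha2A x hxB (hsc ha2s hxs hne)
        -- s ⊆ A₁ ∪ A₂
        have hsub : ∀ x ∈ s, x ∈ ((A₁ ∪ A₂ : Finset V) : Set V) := by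
          intro x hxs
          have : x ∈ A₁ ∪ A₂ ∪ B₁ ∪ B₂ := hcover ▸ Finset.mem_univ x
          simp only [Finset.mem_union] at this
          simp only [Finset.coe_union, Set.mem_union, Finset.mem_coe]
          rcases this with ((h | h) | h) | h
          · exact Or.inl h
          · exact Or.inr h
          · exact absurd h (hnB1 x hxs)
          · exact absurd h (hnB2 x hxs)
        exact le_max_of_le_right (le_max_of_le_left
          (card_le_induce_cliqueNum G _ s hsub hsc))
      · push_neg at hA2
        -- s ⊆ A₁ ∪ B₁
        have hsub : ∀ x ∈ s, x ∈ A₁ ∪ B₁ := by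
          intro x hxs
          have : x ∈ A₁ ∪ A₂ ∪ B₁ ∪ B₂ := hcover ▸ Finset.mem_univ x
          simp only [Finset.mem_union] at this ⊢
          rcases this with ((h | h) | h) | h
          · exact Or.inl h
          · exact absurd h (hA2 x hxs)
          · exact Or.inr h
          · exact absurd h (hnB2 x hxs)
        have hsplit : s = (s ∩ A₁) ∪ (s ∩ B₁) := by
          ext x
          simp only [Finset.mem_union, Finset.mem_inter]
          constructor
          · intro hx
            rcases Finset.mem_union.mp (hsub x hx) with h | h
            · exact Or.inl ⟨hx, h⟩
            · exact Or.inr ⟨hx, h⟩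
          · rintro (⟨h, _⟩ | ⟨h, _⟩) <;> exact h
        have hdisj : Disjoint (s ∩ A₁) (s ∩ B₁) :=
          (hAB₁.mono (Finset.inter_subset_right) (Finset.inter_subset_right))
        have h1 : (s ∩ A₁).card ≤ (G.induce (A₁ : Set V)).cliqueNum :=
          card_le_induce_cliqueNum G _ _ (fun x hx => (Finset.mem_inter.mp hx).2)
            (hsc.subset (by exact_mod_cast Finset.inter_subset_left))
        have h2 : (s ∩ B₁).card ≤ (G.induce (B₁ : Set V)).cliqueNum :=
          card_le_induce_cliqueNum G _ _ (fun x hx => (Finset.mem_inter.mp hx).2)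
            (hsc.subset (by exact_mod_cast Finset.inter_subset_left))
        calc s.card = (s ∩ A₁).card + (s ∩ B₁).card := by
              rw [← Finset.card_union_of_disjoint hdisj, ← hsplit]
          _ ≤ (G.induce (A₁ : Set V)).cliqueNum + (G.induce (B₁ : Set V)).cliqueNum :=
              Nat.add_le_add h1 h2
          _ ≤ _ := le_max_of_le_left (le_max_left _ _)
    · push_neg at hA1
      by_cases hB1 : ∃ x ∈ s, x ∈ B₁
      · obtain ⟨b, hbs, hbB⟩ := hB1
        have hnA2 : ∀ x ∈ s, x ∉ A₂ := by
          intro x hxs hxA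
          have hne : x ≠ b := fun h => (Finset.disjoint_left.mp hAB₃) hxA (h ▸ hbB)
          exact h21 x hxA b hbB (hsc hxs hbs hne)
        by_cases hB2 : ∃ x ∈ s, x ∈ B₂
        · obtain ⟨b2, hb2s, hb2B⟩ := hB2
          -- s ⊆ B₁ ∪ B₂ (no A₁ by hA1, no A₂ by hnA2)
          have hsub : ∀ x ∈ s, x ∈ ((B₁ ∪ B₂ : Finset V) : Set V) := by
            intro x hxs
            have : x ∈ A₁ ∪ A₂ ∪ B₁ ∪ B₂ := hcover ▸ Finset.mem_univ x
            simp only [Finset.mem_union] at this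
            simp only [Finset.coe_union, Set.mem_union, Finset.mem_coe]
            rcases this with ((h | h) | h) | h
            · exact absurd h (hA1 x hxs)
            · exact absurd h (hnA2 x hxs)
            · exact Or.inl h
            · exact Or.inr h
          exact le_max_of_le_right (le_max_of_le_right
            (card_le_induce_cliqueNum G _ s hsub hsc))
        · push_neg at hB2
          -- s ⊆ B₁, bound by ω(A₁)+ω(B₁)
          have hsub : ∀ x ∈ s, x ∈ (B₁ : Set V) := by
            intro x hxs
            have : x ∈ A₁ ∪ A₂ ∪ B₁ ∪ B₂ := hcover ▸ Finset.mem_univ x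
            simp only [Finset.mem_union] at this
            rcases this with ((h | h) | h) | h
            · exact absurd h (hA1 x hxs)
            · exact absurd h (hnA2 x hxs)
            · exact h
            · exact absurd h (hB2 x hxs)
          calc s.card ≤ (G.induce (B₁ : Set V)).cliqueNum :=
                card_le_induce_cliqueNum G _ s hsub hsc
            _ ≤ (G.induce (A₁ : Set V)).cliqueNum + (G.induce (B₁ : Set V)).cliqueNum :=
                Nat.le_add_left _ _
            _ ≤ _ := le_max_of_le_left (le_max_left _ _)
      · push_neg at hB1
        -- no A₁, no B₁: s ⊆ A₂ ∪ B₂, split as before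
        have hsub : ∀ x ∈ s, x ∈ A₂ ∪ B₂ := by
          intro x hxs
          have : x ∈ A₁ ∪ A₂ ∪ B₁ ∪ B₂ := hcover ▸ Finset.mem_univ x
          simp only [Finset.mem_union] at this ⊢
          rcases this with ((h | h) | h) | h
          · exact absurd h (hA1 x hxs)
          · exact Or.inl h
          · exact absurd h (hB1 x hxs)
          · exact Or.inr h
        have hsplit : s = (s ∩ A₂) ∪ (s ∩ B₂) := by
          ext x
          simp only [Finset.mem_union, Finset.mem_inter]
          constructor
          · intro hx
            rcases Finset.mem_union.mp (hsub x hx) with h | h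
            · exact Or.inl ⟨hx, h⟩
            · exact Or.inr ⟨hx, h⟩
          · rintro (⟨h, _⟩ | ⟨h, _⟩) <;> exact h
        have hdisj : Disjoint (s ∩ A₂) (s ∩ B₂) :=
          (hAB₄.mono (Finset.inter_subset_right) (Finset.inter_subset_right))
        have h1 : (s ∩ A₂).card ≤ (G.induce (A₂ : Set V)).cliqueNum :=
          card_le_induce_cliqueNum G _ _ (fun x hx => (Finset.mem_inter.mp hx).2)
            (hsc.subset (by exact_mod_cast Finset.inter_subset_left))
        have h2 : (s ∩ B₂).card ≤ (G.induce (B₂ : Set V)).cliqueNum :=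
          card_le_induce_cliqueNum G _ _ (fun x hx => (Finset.mem_inter.mp hx).2)
            (hsc.subset (by exact_mod_cast Finset.inter_subset_left))
        calc s.card = (s ∩ A₂).card + (s ∩ B₂).card := by
              rw [← Finset.card_union_of_disjoint hdisj, ← hsplit]
          _ ≤ (G.induce (A₂ : Set V)).cliqueNum + (G.induce (B₂ : Set V)).cliqueNum :=
              Nat.add_le_add h1 h2
          _ ≤ _ := le_max_of_le_left (le_max_right _ _)
  · -- easy direction
    apply max_le
    · apply max_le
      · exact join_le A₁ B₁ hAB₁ h11
      · exact join_le A₂ B₂ hAB₄ h22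
    · exact max_le (induce_cliqueNum_le G _) (induce_cliqueNum_le G _)
end

section
/- Let G be a graph whose vertex set is partitioned into A₁, A₂, B₁, B₂ such that A₁–B₁ and A₂–B₂ are complete joins while A₁–B₂ and A₂–B₁ have no edges. Then the minimum vertex cover of G equals the minimum over: |A₁|+|A₂| + vc(G_[B₁∪B₂]); |B₁|+|B₂| + vc(G_[A₁∪A₂]); |A₁|+|B₂| + vc(G_[B₁]) + vc(G_[A₂]); |A₂|+|B₁| + vc(G_[B₂]) + vc(G_[A₁]). -/
open SimpleGraph

/-- The minimum size of a vertex cover of `G`. -/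
noncomputable def vcNum {W : Type*} (G : SimpleGraph W) : ℕ :=
  sInf {n : ℕ | ∃ S : Finset W, S.card = n ∧ ∀ x y : W, G.Adj x y → x ∈ S ∨ y ∈ S}

lemma vcNum_le {W : Type*} (G : SimpleGraph W) (S : Finset W)
    (h : ∀ x y : W, G.Adj x y → x ∈ S ∨ y ∈ S) : vcNum G ≤ S.card :=
  Nat.sInf_le ⟨S, rfl, h⟩

lemma exists_vc {W : Type*} [Fintype W] (G : SimpleGraph W) :
    ∃ S : Finset W, S.card = vcNum G ∧ ∀ x y : W, G.Adj x y → x ∈ S ∨ y ∈ S := by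
  have hne : {n : ℕ | ∃ S : Finset W, S.card = n ∧
      ∀ x y : W, G.Adj x y → x ∈ S ∨ y ∈ S}.Nonempty :=
    ⟨Finset.univ.card, Finset.univ, rfl, fun x y _ => Or.inl (Finset.mem_univ x)⟩
  obtain ⟨S, hS, hcov⟩ := Nat.sInf_mem hne
  exact ⟨S, hS, hcov⟩

lemma vcNum_induce_le {V : Type*} [Fintype V] [DecidableEq V] (G : SimpleGraph V)
    (s S : Finset V) (hS : ∀ x y : V, G.Adj x y → x ∈ S ∨ y ∈ S) :
    vcNum (G.induce (s : Set V)) ≤ (S ∩ s).card := by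
  classical
  set T : Finset ((s : Set V)) := Finset.univ.filter (fun x => (x : V) ∈ S) with hT
  have hcov : ∀ x y, (G.induce (s : Set V)).Adj x y → x ∈ T ∨ y ∈ T := by
    intro x y hxy
    have hadj : G.Adj (x : V) (y : V) := hxy
    rcases hS _ _ hadj with h | h
    · exact Or.inl (by simp [hT, h])
    · exact Or.inr (by simp [hT, h])
  refine (vcNum_le _ T hcov).trans_eq ?_
  refine Finset.card_bij (fun a _ => (a : V)) ?_ ?_ ?_
  · intro a ha
    simp only [hT, Finset.mem_filter] at ha
    simp only [Finset.mem_inter]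
    exact ⟨ha.2, by simpa using a.2⟩
  · intro a _ b _ h; exact Subtype.ext h
  · intro b hb
    simp only [Finset.mem_inter] at hb
    exact ⟨⟨b, by simp [hb.2]⟩, by simp [hT, hb.1], rfl⟩

lemma cover_of_induce {V : Type*} [Fintype V] [DecidableEq V] (G : SimpleGraph V)
    (s : Finset V) :
    ∃ T : Finset V, T.card = vcNum (G.induce (s : Set V)) ∧ T ⊆ s ∧
      ∀ x y : V, x ∈ s → y ∈ s → G.Adj x y → x ∈ T ∨ y ∈ T := by
  obtain ⟨T₀, hcard, hcov⟩ := exists_vc (G.induce (s : Set V))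
  refine ⟨T₀.map ⟨Subtype.val, Subtype.val_injective⟩, by simp [hcard], ?_, ?_⟩
  · intro x hx
    simp only [Finset.mem_map, Function.Embedding.coeFn_mk] at hx
    obtain ⟨a, _, rfl⟩ := hx
    simpa using a.2
  · intro x y hx hy hxy
    have hadj : (G.induce (s : Set V)).Adj ⟨x, by simpa using hx⟩ ⟨y, by simpa using hy⟩ := hxy
    rcases hcov _ _ hadj with h | h
    · exact Or.inl (by simp only [Finset.mem_map, Function.Embedding.coeFn_mk]; exact ⟨_, h, rfl⟩)
    · exact Or.inr (by simp only [Finset.mem_map, Function.Embedding.coeFn_mk]; exact ⟨_, h, rfl⟩)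

/-- Minimum vertex cover at a clique node.  Suppose the vertices of `G` are
partitioned into `A₁, A₂, B₁, B₂` with complete joins `A₁–B₁` and `A₂–B₂` and no
edges `A₁–B₂` nor `A₂–B₁`.  Then the minimum vertex cover of `G` equals the minimum
of `|A₁|+|A₂|+vc(B₁∪B₂)`, `|B₁|+|B₂|+vc(A₁∪A₂)`, `|A₁|+|B₂|+vc(B₁)+vc(A₂)` and
`|A₂|+|B₁|+vc(B₂)+vc(A₁)`. -/
theorem vcNum_clique_node {V : Type*} [Fintype V] [DecidableEq V]
    (G : SimpleGraph V) (A₁ A₂ B₁ B₂ : Finset V)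
    (hcover : A₁ ∪ A₂ ∪ B₁ ∪ B₂ = Finset.univ)
    (hA : Disjoint A₁ A₂) (hB : Disjoint B₁ B₂)
    (hAB₁ : Disjoint A₁ B₁) (hAB₂ : Disjoint A₁ B₂)
    (hAB₃ : Disjoint A₂ B₁) (hAB₄ : Disjoint A₂ B₂)
    (h11 : ∀ x ∈ A₁, ∀ y ∈ B₁, G.Adj x y)
    (h22 : ∀ x ∈ A₂, ∀ y ∈ B₂, G.Adj x y)
    (h12 : ∀ x ∈ A₁, ∀ y ∈ B₂, ¬ G.Adj x y)
    (h21 : ∀ x ∈ A₂, ∀ y ∈ B₁, ¬ G.Adj x y) :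
    vcNum G =
      min (min (A₁.card + A₂.card + vcNum (G.induce ((B₁ ∪ B₂ : Finset V) : Set V)))
               (B₁.card + B₂.card + vcNum (G.induce ((A₁ ∪ A₂ : Finset V) : Set V))))
          (min (A₁.card + B₂.card + vcNum (G.induce (B₁ : Set V))
                  + vcNum (G.induce (A₂ : Set V)))
               (A₂.card + B₁.card + vcNum (G.induce (B₂ : Set V))
                  + vcNum (G.induce (A₁ : Set V)))) := by
  have hmem : ∀ z : V, z ∈ A₁ ∨ z ∈ A₂ ∨ z ∈ B₁ ∨ z ∈ B₂ := by
    intro z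
    have : z ∈ A₁ ∪ A₂ ∪ B₁ ∪ B₂ := by rw [hcover]; exact Finset.mem_univ z
    simpa [Finset.mem_union, or_assoc] using this
  refine le_antisymm (le_min (le_min ?_ ?_) (le_min ?_ ?_)) ?_
  · -- t1
    obtain ⟨T, hTc, hTsub, hTcov⟩ := cover_of_induce G (B₁ ∪ B₂)
    have hcov' : ∀ x y : V, G.Adj x y → x ∈ A₁ ∪ A₂ ∪ T ∨ y ∈ A₁ ∪ A₂ ∪ T := by
      intro x y hxy
      by_cases hx : x ∈ A₁ ∪ A₂
      · exact Or.inl (Finset.mem_union_left _ hx)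
      · by_cases hy : y ∈ A₁ ∪ A₂
        · exact Or.inr (Finset.mem_union_left _ hy)
        · have hx' : x ∈ B₁ ∪ B₂ := by
            simp only [Finset.mem_union] at hx ⊢
            rcases hmem x with h|h|h|h <;> tauto
          have hy' : y ∈ B₁ ∪ B₂ := by
            simp only [Finset.mem_union] at hy ⊢
            rcases hmem y with h|h|h|h <;> tauto
          rcases hTcov x y hx' hy' hxy with h|h
          · exact Or.inl (Finset.mem_union_right _ h)
          · exact Or.inr (Finset.mem_union_right _ h)
    calc vcNum G ≤ (A₁ ∪ A₂ ∪ T).card := vcNum_le _ _ hcov'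
      _ ≤ (A₁ ∪ A₂).card + T.card := Finset.card_union_le _ _
      _ ≤ A₁.card + A₂.card + T.card := Nat.add_le_add_right (Finset.card_union_le _ _) _
      _ = _ := by rw [hTc]
  · -- t2
    obtain ⟨T, hTc, hTsub, hTcov⟩ := cover_of_induce G (A₁ ∪ A₂)
    have hcov' : ∀ x y : V, G.Adj x y → x ∈ B₁ ∪ B₂ ∪ T ∨ y ∈ B₁ ∪ B₂ ∪ T := by
      intro x y hxy
      by_cases hx : x ∈ B₁ ∪ B₂
      · exact Or.inl (Finset.mem_union_left _ hx)
      · by_cases hy : y ∈ B₁ ∪ B₂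
        · exact Or.inr (Finset.mem_union_left _ hy)
        · have hx' : x ∈ A₁ ∪ A₂ := by
            simp only [Finset.mem_union] at hx ⊢
            rcases hmem x with h|h|h|h <;> tauto
          have hy' : y ∈ A₁ ∪ A₂ := by
            simp only [Finset.mem_union] at hy ⊢
            rcases hmem y with h|h|h|h <;> tauto
          rcases hTcov x y hx' hy' hxy with h|h
          · exact Or.inl (Finset.mem_union_right _ h)
          · exact Or.inr (Finset.mem_union_right _ h)
    calc vcNum G ≤ (B₁ ∪ B₂ ∪ T).card := vcNum_le _ _ hcov'
      _ ≤ (B₁ ∪ B₂).card + T.card := Finset.card_union_le _ _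
      _ ≤ B₁.card + B₂.card + T.card := Nat.add_le_add_right (Finset.card_union_le _ _) _
      _ = _ := by rw [hTc]
  · -- t3
    obtain ⟨T₁, hT1c, hT1sub, hT1cov⟩ := cover_of_induce G B₁
    obtain ⟨T₂, hT2c, hT2sub, hT2cov⟩ := cover_of_induce G A₂
    have hcov' : ∀ x y : V, G.Adj x y →
        x ∈ A₁ ∪ B₂ ∪ T₁ ∪ T₂ ∨ y ∈ A₁ ∪ B₂ ∪ T₁ ∪ T₂ := by
      intro x y hxy
      rcases hmem x with hx|hx|hx|hx
      · exact Or.inl (by simp [Finset.mem_union, hx])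
      · rcases hmem y with hy|hy|hy|hy
        · exact Or.inr (by simp [Finset.mem_union, hy])
        · rcases hT2cov x y hx hy hxy with h|h
          · exact Or.inl (by simp [Finset.mem_union, h])
          · exact Or.inr (by simp [Finset.mem_union, h])
        · exact absurd hxy (h21 x hx y hy)
        · exact Or.inr (by simp [Finset.mem_union, hy])
      · rcases hmem y with hy|hy|hy|hy
        · exact Or.inr (by simp [Finset.mem_union, hy])
        · exact absurd hxy.symm (h21 y hy x hx)
        · rcases hT1cov x y hx hy hxy with h|h
          · exact Or.inl (by simp [Finset.mem_union, h])
          · exact Or.inr (by simp [Finset.mem_union, h])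
        · exact Or.inr (by simp [Finset.mem_union, hy])
      · exact Or.inl (by simp [Finset.mem_union, hx])
    calc vcNum G ≤ (A₁ ∪ B₂ ∪ T₁ ∪ T₂).card := vcNum_le _ _ hcov'
      _ ≤ (A₁ ∪ B₂ ∪ T₁).card + T₂.card := Finset.card_union_le _ _
      _ ≤ (A₁ ∪ B₂).card + T₁.card + T₂.card :=
          Nat.add_le_add_right (Finset.card_union_le _ _) _
      _ ≤ A₁.card + B₂.card + T₁.card + T₂.card :=
          Nat.add_le_add_right (Nat.add_le_add_right (Finset.card_union_le _ _) _) _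
      _ = _ := by rw [hT1c, hT2c]
  · -- t4
    obtain ⟨T₁, hT1c, hT1sub, hT1cov⟩ := cover_of_induce G B₂
    obtain ⟨T₂, hT2c, hT2sub, hT2cov⟩ := cover_of_induce G A₁
    have hcov' : ∀ x y : V, G.Adj x y →
        x ∈ A₂ ∪ B₁ ∪ T₁ ∪ T₂ ∨ y ∈ A₂ ∪ B₁ ∪ T₁ ∪ T₂ := by
      intro x y hxy
      rcases hmem x with hx|hx|hx|hx
      · rcases hmem y with hy|hy|hy|hy
        · rcases hT2cov x y hx hy hxy with h|h
          · exact Or.inl (by simp [Finset.mem_union, h])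
          · exact Or.inr (by simp [Finset.mem_union, h])
        · exact Or.inr (by simp [Finset.mem_union, hy])
        · exact Or.inr (by simp [Finset.mem_union, hy])
        · exact absurd hxy (h12 x hx y hy)
      · exact Or.inl (by simp [Finset.mem_union, hx])
      · exact Or.inl (by simp [Finset.mem_union, hx])
      · rcases hmem y with hy|hy|hy|hy
        · exact absurd hxy.symm (h12 y hy x hx)
        · exact Or.inr (by simp [Finset.mem_union, hy])
        · exact Or.inr (by simp [Finset.mem_union, hy])
        · rcases hT1cov x y hx hy hxy with h|h
          · exact Or.inl (by simp [Finset.mem_union, h])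
          · exact Or.inr (by simp [Finset.mem_union, h])
    calc vcNum G ≤ (A₂ ∪ B₁ ∪ T₁ ∪ T₂).card := vcNum_le _ _ hcov'
      _ ≤ (A₂ ∪ B₁ ∪ T₁).card + T₂.card := Finset.card_union_le _ _
      _ ≤ (A₂ ∪ B₁).card + T₁.card + T₂.card :=
          Nat.add_le_add_right (Finset.card_union_le _ _) _
      _ ≤ A₂.card + B₁.card + T₁.card + T₂.card :=
          Nat.add_le_add_right (Nat.add_le_add_right (Finset.card_union_le _ _) _) _
      _ = _ := by rw [hT1c, hT2c]
  · -- lower bound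
    obtain ⟨S, hScard, hScov⟩ := exists_vc G
    rw [← hScard]
    have h1 : A₁ ⊆ S ∨ B₁ ⊆ S := by
      by_contra h
      push_neg at h
      rcases Finset.not_subset.mp h.1 with ⟨a, ha, haS⟩
      rcases Finset.not_subset.mp h.2 with ⟨b, hb, hbS⟩
      rcases hScov a b (h11 a ha b hb) with h'|h' <;> contradiction
    have h2 : A₂ ⊆ S ∨ B₂ ⊆ S := by
      by_contra h
      push_neg at h
      rcases Finset.not_subset.mp h.1 with ⟨a, ha, haS⟩
      rcases Finset.not_subset.mp h.2 with ⟨b, hb, hbS⟩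
      rcases hScov a b (h22 a ha b hb) with h'|h' <;> contradiction
    rcases h1 with hS1 | hS1 <;> rcases h2 with hS2 | hS2
    · -- A₁ ⊆ S, A₂ ⊆ S : use t1
      have hv := vcNum_induce_le G (B₁ ∪ B₂) S hScov
      have hdisj : Disjoint (A₁ ∪ A₂) (S ∩ (B₁ ∪ B₂)) :=
        Disjoint.mono_right Finset.inter_subset_right (by
          simp only [Finset.disjoint_union_left, Finset.disjoint_union_right]
          exact ⟨⟨hAB₁, hAB₃⟩, hAB₂, hAB₄⟩)
      have hsub : A₁ ∪ A₂ ∪ (S ∩ (B₁ ∪ B₂)) ⊆ S := by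
        intro z hz
        simp only [Finset.mem_union, Finset.mem_inter] at hz
        rcases hz with (hz|hz)|hz
        exacts [hS1 hz, hS2 hz, hz.1]
      have hb : A₁.card + A₂.card + vcNum (G.induce ((B₁ ∪ B₂ : Finset V) : Set V)) ≤ S.card := by
        have hc : A₁.card + A₂.card + (S ∩ (B₁ ∪ B₂)).card ≤ S.card := by
          have := Finset.card_le_card hsub
          rw [Finset.card_union_of_disjoint hdisj, Finset.card_union_of_disjoint hA] at this
          exact this
        omega
      exact le_trans (le_trans (min_le_left _ _) (min_le_left _ _)) hb
    · -- A₁ ⊆ S, B₂ ⊆ S : use t3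
      have hv1 := vcNum_induce_le G B₁ S hScov
      have hv2 := vcNum_induce_le G A₂ S hScov
      have hd1 : Disjoint (A₁ ∪ B₂) (S ∩ B₁) :=
        Disjoint.mono_right Finset.inter_subset_right (by
          simp only [Finset.disjoint_union_left]
          exact ⟨hAB₁, hB.symm⟩)
      have hd2 : Disjoint (A₁ ∪ B₂ ∪ (S ∩ B₁)) (S ∩ A₂) :=
        Disjoint.mono_right Finset.inter_subset_right (by
          simp only [Finset.disjoint_union_left]
          exact ⟨⟨hA, hAB₄.symm⟩, Disjoint.mono_left Finset.inter_subset_right hAB₃.symm⟩)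
      have hsub : A₁ ∪ B₂ ∪ (S ∩ B₁) ∪ (S ∩ A₂) ⊆ S := by
        intro z hz
        simp only [Finset.mem_union, Finset.mem_inter] at hz
        rcases hz with ((hz|hz)|hz)|hz
        exacts [hS1 hz, hS2 hz, hz.1, hz.1]
      have hb : A₁.card + B₂.card + vcNum (G.induce (B₁ : Set V))
          + vcNum (G.induce (A₂ : Set V)) ≤ S.card := by
        have hc : A₁.card + B₂.card + (S ∩ B₁).card + (S ∩ A₂).card ≤ S.card := by
          have := Finset.card_le_card hsub
          rw [Finset.card_union_of_disjoint hd2, Finset.card_union_of_disjoint hd1,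
            Finset.card_union_of_disjoint hAB₂] at this
          exact this
        omega
      exact le_trans (le_trans (min_le_right _ _) (min_le_left _ _)) hb
    · -- B₁ ⊆ S, A₂ ⊆ S : use t4
      have hv1 := vcNum_induce_le G B₂ S hScov
      have hv2 := vcNum_induce_le G A₁ S hScov
      have hd1 : Disjoint (A₂ ∪ B₁) (S ∩ B₂) :=
        Disjoint.mono_right Finset.inter_subset_right (by
          simp only [Finset.disjoint_union_left]
          exact ⟨hAB₄, hB⟩)
      have hd2 : Disjoint (A₂ ∪ B₁ ∪ (S ∩ B₂)) (S ∩ A₁) :=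
        Disjoint.mono_right Finset.inter_subset_right (by
          simp only [Finset.disjoint_union_left]
          exact ⟨⟨hA.symm, hAB₁.symm⟩, Disjoint.mono_left Finset.inter_subset_right hAB₂.symm⟩)
      have hsub : A₂ ∪ B₁ ∪ (S ∩ B₂) ∪ (S ∩ A₁) ⊆ S := by
        intro z hz
        simp only [Finset.mem_union, Finset.mem_inter] at hz
        rcases hz with ((hz|hz)|hz)|hz
        exacts [hS2 hz, hS1 hz, hz.1, hz.1]
      have hb : A₂.card + B₁.card + vcNum (G.induce (B₂ : Set V))
          + vcNum (G.induce (A₁ : Set V)) ≤ S.card := by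
        have hc : A₂.card + B₁.card + (S ∩ B₂).card + (S ∩ A₁).card ≤ S.card := by
          have := Finset.card_le_card hsub
          rw [Finset.card_union_of_disjoint hd2, Finset.card_union_of_disjoint hd1,
            Finset.card_union_of_disjoint hAB₃] at this
          exact this
        omega
      exact le_trans (le_trans (min_le_right _ _) (min_le_right _ _)) hb
    · -- B₁ ⊆ S, B₂ ⊆ S : use t2
      have hv := vcNum_induce_le G (A₁ ∪ A₂) S hScov
      have hdisj : Disjoint (B₁ ∪ B₂) (S ∩ (A₁ ∪ A₂)) :=
        Disjoint.mono_right Finset.inter_subset_right (by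
          simp only [Finset.disjoint_union_left, Finset.disjoint_union_right]
          exact ⟨⟨hAB₁.symm, hAB₂.symm⟩, hAB₃.symm, hAB₄.symm⟩)
      have hsub : B₁ ∪ B₂ ∪ (S ∩ (A₁ ∪ A₂)) ⊆ S := by
        intro z hz
        simp only [Finset.mem_union, Finset.mem_inter] at hz
        rcases hz with (hz|hz)|hz
        exacts [hS1 hz, hS2 hz, hz.1]
      have hb : B₁.card + B₂.card + vcNum (G.induce ((A₁ ∪ A₂ : Finset V) : Set V)) ≤ S.card := by
        have hc : B₁.card + B₂.card + (S ∩ (A₁ ∪ A₂)).card ≤ S.card := by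
          have := Finset.card_le_card hsub
          rw [Finset.card_union_of_disjoint hdisj, Finset.card_union_of_disjoint hB] at this
          exact this
        omega
      exact le_trans (le_trans (min_le_left _ _) (min_le_right _ _)) hb
end
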